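/- arXiv:1002.1377 — 3 statements merged into one kernel-verified Lean document; each statement's English description precedes it below -/
import Mathlib

section
/- Let T be the infinite binary tree (finite binary strings), with |t| the level (length) of a node t, and weight w(t) = (1+|t|)^{-β} with 1 < β < 2. Let V* : ℓ₁(T) → ℓ₂(T,W) be the operator (V*μ)(t) = Σ_{u ⪰ t} μ(u), where u ⪰ t means t is an ancestor of u (t is a prefix of u, including u = t), and ℓ₂(T,W) carries the norm ‖f‖²_{2,W} = Σ_{t∈T} w(t) f(t)². Then there exists a constant C₂ = C₂(β) > 0 such that for all positive integers n, the n-th dyadic entropy number satisfies e_n(V*) ≤ C₂ · n^{-(β-1)/2}. -/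
set_option maxHeartbeats 1600000


open scoped ENNReal

/-- A node of the infinite binary tree `T` is a finite binary string;
its level `|t|` is its length. -/
abbrev Node : Type := List Bool

/-- `μ` belongs to `ℓ₁(T)`, i.e. `Σ_t |μ(t)| < ∞`. -/
def MemL1 (μ : Node → ℝ) : Prop := Summable fun t : Node => |μ t|

/-- The `ℓ₁(T)` norm `‖μ‖₁ = Σ_t |μ(t)|`. -/
noncomputable def l1Norm (μ : Node → ℝ) : ℝ := ∑' t : Node, |μ t|

/-- `(V*μ)(t) = Σ_{u ⪰ t} μ(u)`, the sum over all nodes `u` having `t` as a prefix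
(including `u = t`). -/
noncomputable def Vstar (μ : Node → ℝ) (t : Node) : ℝ := ∑' u : {u : Node // t <+: u}, μ u.1

/-- The weight `w(t) = (1 + |t|)^{-β}`. -/
noncomputable def wgt (β : ℝ) (t : Node) : ℝ := ((1 : ℝ) + (t.length : ℝ)) ^ (-β)

/-- The squared distance of `f, g` in the weighted space `ℓ₂(T,W)`,
`Σ_t w(t) (f(t) - g(t))²`, computed in `ℝ≥0∞`. -/
noncomputable def distSqW (β : ℝ) (f g : Node → ℝ) : ℝ≥0∞ :=
  ∑' t : Node, ENNReal.ofReal (wgt β t * (f t - g t) ^ 2)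

namespace EntropyAux

noncomputable def wseq (β : ℝ) (k : ℕ) : ℝ := ((1:ℝ) + (k:ℝ)) ^ (-β)

lemma wgt_eq (β : ℝ) (t : Node) : wgt β t = wseq β t.length := rfl

lemma wseq_pos (β : ℝ) (k : ℕ) : 0 < wseq β k :=
  Real.rpow_pos_of_pos (by positivity) _

lemma summable_wseq (hβ : 1 < β) : Summable (wseq β) := by
  have h : Summable (fun n : ℕ => (n:ℝ) ^ (-β)) := Real.summable_nat_rpow.2 (by linarith)
  have h2 := (summable_nat_add_iff 1).2 h
  refine h2.congr fun k => ?_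
  unfold wseq; push_cast; ring_nf

lemma summable_wseq_shift (hβ : 1 < β) (M : ℕ) : Summable (fun j => wseq β (M + j)) := by
  have h2 := (summable_nat_add_iff M).2 (summable_wseq hβ)
  exact h2.congr fun k => by rw [add_comm]

noncomputable def tailW (β : ℝ) (M : ℕ) : ℝ := ∑' j : ℕ, wseq β (M + j)

noncomputable def cw (β : ℝ) : ℝ := tailW β 0

lemma cw_eq (β : ℝ) : cw β = ∑' j : ℕ, wseq β j := by
  unfold cw tailW; exact tsum_congr fun j => by rw [zero_add]

lemma tailW_nonneg (β : ℝ) (M : ℕ) : 0 ≤ tailW β M :=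
  tsum_nonneg fun j => (wseq_pos β _).le

lemma cw_pos (hβ : 1 < β) : 0 < cw β := by
  rw [cw_eq]
  have := summable_wseq (β := β) hβ
  calc (0:ℝ) < wseq β 0 := wseq_pos β 0
  _ ≤ ∑' j : ℕ, wseq β j := Summable.le_tsum this 0 fun j _ => (wseq_pos β j).le

lemma tailW_le (hβ1 : 1 < β) {M : ℕ} (hM : 1 ≤ M) :
    tailW β M ≤ cw β * (M:ℝ) ^ (1 - β) := by
  haveI : NeZero M := ⟨by omega⟩
  have hMpos : (0:ℝ) < M := by exact_mod_cast hM
  set e := (Nat.divModEquiv M).symm with he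
  have hsum : Summable (fun j => wseq β (M + j)) := summable_wseq_shift hβ1 M
  have hsum2 : Summable (fun p : ℕ × Fin M => wseq β (M + e p)) :=
    (Equiv.summable_iff e).2 hsum
  have step1 : tailW β M = ∑' p : ℕ × Fin M, wseq β (M + e p) :=
    (Equiv.tsum_eq e (fun j => wseq β (M + j))).symm
  -- pointwise bound
  have key : ∀ (q : ℕ) (r : Fin M), wseq β (M + e (q, r)) ≤ (M:ℝ)^(1-β) * wseq β q / M := by
    intro q r
    have hval : (M:ℝ) * (q+1) ≤ (1:ℝ) + (M + e (q, r) : ℕ) := by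
      have h0 : M * q ≤ (e (q, r) : ℕ) := by
        have : e (q, r) = q * M + (r : ℕ) := rfl
        rw [this, Nat.mul_comm]
        exact Nat.le_add_right _ _
      have h0R : (M:ℝ) * (q:ℝ) ≤ ((e (q, r) : ℕ) : ℝ) := by exact_mod_cast h0
      push_cast
      nlinarith [h0R, hMpos]
    have hb : ((M:ℝ) * (q+1)) ^ (-β) ≤ wseq β (M + e (q,r)) → True := fun _ => trivial
    have h1 : wseq β (M + e (q, r)) ≤ ((M:ℝ) * (q+1)) ^ (-β) := by
      unfold wseq
      exact Real.rpow_le_rpow_of_nonpos (by positivity) hval (by linarith)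
    have h2 : ((M:ℝ) * (q+1)) ^ (-β) = (M:ℝ)^(1-β) * wseq β q / M := by
      unfold wseq
      rw [Real.mul_rpow (by positivity) (by positivity)]
      rw [show (1:ℝ) + q = (q:ℝ) + 1 by ring]
      rw [show (1:ℝ) - β = (-β) + 1 by ring, Real.rpow_add hMpos, Real.rpow_one]
      field_simp
    linarith
  -- assemble
  have hprod := Summable.tsum_prod' hsum2 (fun q => hsum2.prod_factor q)
  have hRHSsummable : Summable (fun q : ℕ => (M:ℝ)^(1-β) * wseq β q) :=
    (summable_wseq hβ1).mul_left _
  have hinner_le : ∀ q : ℕ, (∑' r : Fin M, wseq β (M + e (q, r))) ≤ (M:ℝ)^(1-β) * wseq β q := by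
    intro q
    rw [tsum_fintype]
    calc ∑ r : Fin M, wseq β (M + e (q, r)) ≤ ∑ _r : Fin M, (M:ℝ)^(1-β) * wseq β q / M :=
          Finset.sum_le_sum fun r _ => key q r
    _ = (M:ℝ)^(1-β) * wseq β q := by
          rw [Finset.sum_const, Finset.card_univ, Fintype.card_fin, nsmul_eq_mul]
          field_simp
  have houter_summable : Summable (fun q : ℕ => ∑' r : Fin M, wseq β (M + e (q, r))) := by
    refine Summable.of_nonneg_of_le (fun q => tsum_nonneg fun r => (wseq_pos β _).le)
      hinner_le hRHSsummable
  calc tailW β M = ∑' (q : ℕ) (r : Fin M), wseq β (M + e (q, r)) := by rw [step1, hprod]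
  _ ≤ ∑' q : ℕ, (M:ℝ)^(1-β) * wseq β q := Summable.tsum_le_tsum hinner_le houter_summable hRHSsummable
  _ = (M:ℝ)^(1-β) * ∑' q : ℕ, wseq β q := tsum_mul_left
  _ = cw β * (M:ℝ)^(1-β) := by rw [cw_eq]; ring

end EntropyAux

namespace EntropyAux

instance fintypeLen (k : ℕ) : Fintype {l : List Bool // l.length = k} :=
  Fintype.ofEquiv (List.Vector Bool k) (Equiv.refl _)

def levFin (k : ℕ) : Finset Node := Finset.image List.ofFn (Finset.univ : Finset (Fin k → Bool))

lemma mem_levFin {k : ℕ} {t : Node} : t ∈ levFin k ↔ t.length = k := by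
  constructor
  · intro h
    obtain ⟨f, _, rfl⟩ := Finset.mem_image.1 h
    simp
  · intro h
    refine Finset.mem_image.2 ⟨fun i => t[(i:ℕ)]'(by omega), Finset.mem_univ _, ?_⟩
    refine List.ext_getElem (by simp [h]) ?_
    intro n h1 h2
    simp [List.getElem_ofFn]

lemma card_levFin (k : ℕ) : (levFin k).card = 2^k := by
  rw [levFin, Finset.card_image_of_injective _ List.ofFn_injective]
  simp [Finset.card_univ]

def Elow (m : ℕ) : Finset Node := (Finset.range (m+1)).biUnion levFin

lemma mem_Elow {m : ℕ} {t : Node} : t ∈ Elow m ↔ t.length ≤ m := by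
  simp only [Elow, Finset.mem_biUnion, Finset.mem_range, mem_levFin]
  constructor
  · rintro ⟨a, ha, rfl⟩; omega
  · intro h; exact ⟨t.length, by omega, rfl⟩

lemma card_Elow (m : ℕ) : (Elow m).card ≤ 2^(m+1) := by
  calc (Elow m).card ≤ ∑ k ∈ Finset.range (m+1), (levFin k).card := Finset.card_biUnion_le
  _ = ∑ k ∈ Finset.range (m+1), 2^k := by simp [card_levFin]
  _ ≤ 2^(m+1) := by
      induction m with
      | zero => simp
      | succ p ih =>
        rw [Finset.sum_range_succ]
        calc _ ≤ 2^(p+1) + 2^(p+1) := by omega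
        _ = 2^(p+2) := by ring

lemma prefix_take_iff' {t u : Node} {m : ℕ} (h : t.length ≤ m) :
    t <+: u ↔ t <+: u.take m := by
  rw [List.prefix_take_iff]
  exact ⟨fun h' => ⟨h', h⟩, fun h' => h'.1⟩

lemma prefix_eq_of_len {t₁ t₂ u : Node} (h1 : t₁ <+: u) (h2 : t₂ <+: u)
    (h : t₁.length = t₂.length) : t₁ = t₂ := by
  rw [List.prefix_iff_eq_take] at h1 h2
  rw [h1, h2, h]

section Mu

variable {μ : Node → ℝ}

lemma summable_ind_abs (hμ : Summable fun u : Node => |μ u|) (t : Node) :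
    Summable (fun u : Node => if t <+: u then |μ u| else 0) := by
  refine Summable.of_nonneg_of_le (fun u => by positivity) (fun u => ?_) hμ
  by_cases h : t <+: u <;> simp [h, abs_nonneg]

lemma summable_ind (hμ : Summable fun u : Node => |μ u|) (t : Node) :
    Summable (fun u : Node => if t <+: u then μ u else 0) := by
  refine Summable.of_abs (Summable.of_nonneg_of_le (fun u => abs_nonneg _) (fun u => ?_) hμ)
  by_cases h : t <+: u <;> simp [h, abs_nonneg]

lemma Vstar_eq_tsum (t : Node) :
    Vstar μ t = ∑' u : Node, (if t <+: u then μ u else 0) := by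
  calc Vstar μ t = ∑' x : ↑{u : Node | t <+: u}, μ ↑x := rfl
  _ = ∑' u : Node, Set.indicator {u : Node | t <+: u} μ u := tsum_subtype _ μ
  _ = ∑' u : Node, (if t <+: u then μ u else 0) :=
      tsum_congr fun u => by rw [Set.indicator_apply]; rfl

lemma abs_Vstar_le (hμ : Summable fun u : Node => |μ u|) (t : Node) :
    |Vstar μ t| ≤ ∑' u : Node, (if t <+: u then |μ u| else 0) := by
  rw [Vstar_eq_tsum]
  have := norm_tsum_le_tsum_norm (f := fun u : Node => if t <+: u then μ u else 0)
    (by refine (summable_ind_abs hμ t).congr fun u => ?_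
        by_cases h : t <+: u <;> simp [h])
  refine le_trans this (le_of_eq (tsum_congr fun u => ?_))
  by_cases h : t <+: u <;> simp [h]

lemma ind_card_le (u : Node) (k : ℕ) :
    (((levFin k).filter (fun t => t <+: u)).card : ℝ) ≤ 1 := by
  have hcard : ((levFin k).filter (fun t => t <+: u)).card ≤ 1 := by
    refine Finset.card_le_one.2 fun a ha b hb => ?_
    simp only [Finset.mem_filter, mem_levFin] at ha hb
    exact prefix_eq_of_len ha.2 hb.2 (ha.1.trans hb.1.symm)
  exact_mod_cast hcard

lemma ind_sum_le (u : Node) (k : ℕ) :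
    (∑ t ∈ levFin k, if t <+: u then |μ u| else 0) ≤ |μ u| := by
  rw [← Finset.sum_filter, Finset.sum_const, nsmul_eq_mul]
  calc (((levFin k).filter (fun t => t <+: u)).card : ℝ) * |μ u| ≤ 1 * |μ u| :=
        mul_le_mul_of_nonneg_right (ind_card_le u k) (abs_nonneg _)
  _ = |μ u| := one_mul _

lemma level_bound (hμ : Summable fun u : Node => |μ u|) (k : ℕ) :
    ∑ t ∈ levFin k, |Vstar μ t| ≤ l1Norm μ := by
  have step1 : ∀ t ∈ levFin k, |Vstar μ t| ≤ ∑' u : Node, (if t <+: u then |μ u| else 0) :=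
    fun t _ => abs_Vstar_le hμ t
  calc ∑ t ∈ levFin k, |Vstar μ t|
      ≤ ∑ t ∈ levFin k, ∑' u : Node, (if t <+: u then |μ u| else 0) :=
        Finset.sum_le_sum step1
  _ = ∑' u : Node, ∑ t ∈ levFin k, (if t <+: u then |μ u| else 0) :=
        (Summable.tsum_finsetSum (fun t _ => summable_ind_abs hμ t)).symm
  _ ≤ ∑' u : Node, |μ u| := by
        refine Summable.tsum_le_tsum (fun u => ind_sum_le u k) ?_ hμ
        refine Summable.of_nonneg_of_le (fun u => ?_) (fun u => ind_sum_le u k) hμ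
        exact Finset.sum_nonneg fun t _ => by positivity
  _ = l1Norm μ := rfl

lemma sum_sq_le_sq_sum {S : Finset Node} {f : Node → ℝ} (hf : ∀ t ∈ S, 0 ≤ f t) :
    ∑ t ∈ S, (f t)^2 ≤ (∑ t ∈ S, f t)^2 := by
  have h : ∀ t ∈ S, (f t)^2 ≤ f t * ∑ s ∈ S, f s := by
    intro t ht
    rw [sq]
    exact mul_le_mul_of_nonneg_left (Finset.single_le_sum hf ht) (hf t ht)
  calc ∑ t ∈ S, (f t)^2 ≤ ∑ t ∈ S, f t * ∑ s ∈ S, f s := Finset.sum_le_sum h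
  _ = (∑ t ∈ S, f t)^2 := by rw [← Finset.sum_mul, sq]

lemma level_sq_bound (hμ : Summable fun u : Node => |μ u|) (h1 : l1Norm μ ≤ 1) (k : ℕ) :
    ∑ t ∈ levFin k, (Vstar μ t)^2 ≤ 1 := by
  have habs : ∑ t ∈ levFin k, |Vstar μ t| ≤ 1 := (level_bound hμ k).trans h1
  have h0 : ∀ t ∈ levFin k, 0 ≤ |Vstar μ t| := fun t _ => abs_nonneg _
  calc ∑ t ∈ levFin k, (Vstar μ t)^2 = ∑ t ∈ levFin k, |Vstar μ t|^2 := by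
        refine Finset.sum_congr rfl fun t _ => (sq_abs _).symm
  _ ≤ (∑ t ∈ levFin k, |Vstar μ t|)^2 := sum_sq_le_sq_sum h0
  _ ≤ 1 := by nlinarith [Finset.sum_nonneg h0]

end Mu
end EntropyAux

namespace EntropyAux
section Push
variable {μ : Node → ℝ}

noncomputable def pushC (μ : Node → ℝ) (m : ℕ) (v : Node) : ℝ :=
  ∑' u : {u : Node // u.take m = v}, μ u.1

noncomputable def pushCabs (μ : Node → ℝ) (m : ℕ) (v : Node) : ℝ :=
  ∑' u : {u : Node // u.take m = v}, |μ u.1|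

lemma summable_fiber_comp {f : Node → ℝ} (hf : Summable f) (m : ℕ) (v : Node) :
    Summable (fun u : {u : Node // u.take m = v} => f u.1) :=
  hf.subtype {u : Node | u.take m = v}

lemma summable_sigma_comp {f : Node → ℝ} (hf : Summable f) (m : ℕ) :
    Summable (fun p : Σ v : Node, {u : Node // u.take m = v} => f p.2.1) :=
  (Equiv.summable_iff (Equiv.sigmaFiberEquiv (fun u : Node => u.take m))).2 hf

lemma summable_pushCabs (hμ : Summable fun u : Node => |μ u|) (m : ℕ) :
    Summable (pushCabs μ m) :=
  (summable_sigma_comp hμ m).sigma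

lemma pushCabs_nonneg (m : ℕ) (v : Node) : 0 ≤ pushCabs μ m v :=
  tsum_nonneg fun u => abs_nonneg _

lemma abs_pushC_le (hμ : Summable fun u : Node => |μ u|) (m : ℕ) (v : Node) :
    |pushC μ m v| ≤ pushCabs μ m v := by
  have h := norm_tsum_le_tsum_norm (f := fun u : {u : Node // u.take m = v} => μ u.1)
    ((summable_fiber_comp hμ m v).congr fun u => (Real.norm_eq_abs _).symm)
  rw [Real.norm_eq_abs] at h
  exact h.trans (le_of_eq (tsum_congr fun u => Real.norm_eq_abs _))

lemma sum_pushCabs_le (hμ : Summable fun u : Node => |μ u|) (m : ℕ) :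
    ∑ v ∈ Elow m, pushCabs μ m v ≤ l1Norm μ := by
  have h1 : ∑ v ∈ Elow m, pushCabs μ m v ≤ ∑' v : Node, pushCabs μ m v :=
    Summable.sum_le_tsum _ (fun v _ => pushCabs_nonneg m v) (summable_pushCabs hμ m)
  have h2 : ∑' v : Node, pushCabs μ m v
      = ∑' p : Σ v : Node, {u : Node // u.take m = v}, |μ p.2.1| :=
    (Summable.tsum_sigma' (fun v => summable_fiber_comp hμ m v) (summable_sigma_comp hμ m)).symm
  have h3 : ∑' p : Σ v : Node, {u : Node // u.take m = v}, |μ p.2.1| = ∑' u : Node, |μ u| :=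
    Equiv.tsum_eq (Equiv.sigmaFiberEquiv (fun u : Node => u.take m)) (fun u => |μ u|)
  rw [h2, h3] at h1
  exact h1

lemma pushC_eq_zero {m : ℕ} {v : Node} (h : ¬ v.length ≤ m) : pushC μ m v = 0 := by
  have he : IsEmpty {u : Node // u.take m = v} := by
    refine ⟨fun u => h ?_⟩
    rw [← u.2, List.length_take]
    omega
  exact tsum_empty

lemma Vstar_eq_push (hμ : Summable fun u : Node => |μ u|) (m : ℕ) {t : Node}
    (ht : t.length ≤ m) :
    Vstar μ t = ∑ v ∈ Elow m, pushC μ m v * (if t <+: v then 1 else 0) := by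
  set F : Node → ℝ := fun u => if t <+: u then μ u else 0 with hF
  have hFsummable : Summable F := summable_ind hμ t
  have h2 : ∑' u : Node, F u = ∑' p : Σ v : Node, {u : Node // u.take m = v}, F p.2.1 :=
    (Equiv.tsum_eq (Equiv.sigmaFiberEquiv (fun u : Node => u.take m)) F).symm
  have h3 : ∑' p : Σ v : Node, {u : Node // u.take m = v}, F p.2.1
      = ∑' v : Node, ∑' c : {u : Node // u.take m = v}, F c.1 :=
    Summable.tsum_sigma' (fun v => summable_fiber_comp hFsummable m v) (summable_sigma_comp hFsummable m)
  have h4 : ∀ v : Node, (∑' c : {u : Node // u.take m = v}, F c.1)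
      = if t <+: v then pushC μ m v else 0 := by
    intro v
    by_cases hv : t <+: v
    · simp only [hv, if_true, pushC]
      refine tsum_congr fun c => ?_
      have : t <+: c.1 := by
        rw [prefix_take_iff' ht, c.2]
        exact hv
      simp only [hF, this, if_true]
    · simp only [hv, if_false]
      have : ∀ c : {u : Node // u.take m = v}, F c.1 = 0 := by
        intro c
        have : ¬ t <+: c.1 := by
          rw [prefix_take_iff' ht, c.2]
          exact hv
        simp only [hF, this, if_false]
      rw [tsum_congr this, tsum_zero]
  have h5 : ∑' v : Node, (if t <+: v then pushC μ m v else 0)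
      = ∑ v ∈ Elow m, (if t <+: v then pushC μ m v else 0) := by
    refine tsum_eq_sum fun v hv => ?_
    rw [pushC_eq_zero (fun h => hv (mem_Elow.2 h))]
    simp
  calc Vstar μ t = ∑' u : Node, F u := Vstar_eq_tsum t
  _ = ∑' v : Node, ∑' c : {u : Node // u.take m = v}, F c.1 := by rw [h2, h3]
  _ = ∑' v : Node, (if t <+: v then pushC μ m v else 0) := tsum_congr h4
  _ = ∑ v ∈ Elow m, (if t <+: v then pushC μ m v else 0) := h5
  _ = ∑ v ∈ Elow m, pushC μ m v * (if t <+: v then 1 else 0) := by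
      refine Finset.sum_congr rfl fun v _ => ?_
      by_cases hv : t <+: v <;> simp [hv]

end Push
end EntropyAux

namespace EntropyAux
section Maurey
open Finset
open scoped Classical
variable {V : Type*} [NormedAddCommGroup V] [InnerProductSpace ℝ V]

noncomputable def symm0 (A : Finset V) : Finset V :=
  (A ∪ A.image (fun a => -a)) ∪ {0}

noncomputable def symGrid (A : Finset V) (k : ℕ) : Finset V :=
  (Fintype.piFinset (fun _ : Fin k => symm0 A)).image
    (fun f => (k:ℝ)⁻¹ • ∑ j, f j)

lemma mem_symGrid_of {A : Finset V} {k : ℕ} (f : Fin k → V) (hf : ∀ j, f j ∈ symm0 A) :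
    ((k:ℝ)⁻¹ • ∑ j, f j) ∈ symGrid A k := by
  unfold symGrid
  exact Finset.mem_image.2 ⟨f, Fintype.mem_piFinset.2 hf, rfl⟩

lemma zero_mem_symm0 (A : Finset V) : (0:V) ∈ symm0 A := by
  classical
  simp [symm0]

lemma card_symm0 (A : Finset V) : (symm0 A).card ≤ 2 * A.card + 1 := by
  classical
  calc (symm0 A).card ≤ (A ∪ A.image (fun a => -a)).card + ({0} : Finset V).card :=
        Finset.card_union_le _ _
  _ ≤ (A.card + (A.image (fun a => -a)).card) + 1 := by
      have := Finset.card_union_le A (A.image (fun a => -a))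
      simp only [Finset.card_singleton]
      omega
  _ ≤ 2 * A.card + 1 := by
      have := Finset.card_image_le (s := A) (f := fun a : V => -a)
      omega

lemma card_symGrid (A : Finset V) (k : ℕ) : (symGrid A k).card ≤ (symm0 A).card ^ k := by
  classical
  calc (symGrid A k).card ≤ (Fintype.piFinset (fun _ : Fin k => symm0 A)).card := by
        unfold symGrid
        exact Finset.card_image_le
  _ = (symm0 A).card ^ k := by
      rw [Fintype.card_piFinset]
      simp

lemma norm_symm0_le {A : Finset V} {r : ℝ} (hr : 0 ≤ r) (hA : ∀ a ∈ A, ‖a‖ ≤ r) :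
    ∀ b ∈ symm0 A, ‖b‖ ≤ r := by
  classical
  intro b hb
  simp only [symm0, Finset.mem_union, Finset.mem_image, Finset.mem_singleton] at hb
  rcases hb with (h | h) | h
  · exact hA b h
  · obtain ⟨a, ha, rfl⟩ := h
    rw [norm_neg]; exact hA a ha
  · rw [h, norm_zero]; exact hr

variable {ι : Type*}

lemma avg_step (s : Finset ι) (c : ι → ℝ) (z : ι → V) (A : Finset V) (r : ℝ)
    (hz : ∀ v ∈ s, z v ∈ A) (hA : ∀ b ∈ symm0 A, ‖b‖ ≤ r)
    (hc1 : ∑ v ∈ s, |c v| ≤ 1) (y : V) :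
    ∃ b ∈ symm0 A, ‖y + b - (∑ v ∈ s, c v • z v)‖^2 ≤ ‖y‖^2 + r^2 := by
  classical
  set x := ∑ v ∈ s, c v • z v with hx
  have hne : (symm0 A).Nonempty := ⟨0, zero_mem_symm0 A⟩
  obtain ⟨b0, hb0mem, hb0min⟩ := Finset.exists_min_image (symm0 A) (fun b => ‖y + b - x‖^2) hne
  refine ⟨b0, hb0mem, ?_⟩
  set t0 := ∑ v ∈ s, |c v| with ht0
  have ht0nonneg : 0 ≤ t0 := Finset.sum_nonneg fun v _ => abs_nonneg _
  set bv : ι → V := fun v => if 0 ≤ c v then z v else -(z v) with hbv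
  have hbvmem : ∀ v ∈ s, bv v ∈ symm0 A := by
    intro v hv
    simp only [hbv, symm0, Finset.mem_union, Finset.mem_image]
    by_cases h : 0 ≤ c v
    · simp only [h, if_true]
      exact Or.inl (Or.inl (hz v hv))
    · simp only [h, if_false]
      exact Or.inl (Or.inr ⟨z v, hz v hv, rfl⟩)
  have hsmul : ∀ v : ι, |c v| • bv v = c v • z v := by
    intro v
    by_cases h : 0 ≤ c v
    · simp only [hbv, h, if_true, abs_of_nonneg h]
    · simp only [hbv, h, if_false, abs_of_neg (lt_of_not_ge h), smul_neg, neg_smul, neg_neg]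
  have hψ : ∀ b : V, ‖y + b - x‖^2 = ‖y - x‖^2 + 2 * inner ℝ (y-x) b + ‖b‖^2 := by
    intro b
    rw [show y + b - x = (y - x) + b by abel]
    exact norm_add_sq_real _ b
  have hnormbv : ∀ v ∈ s, ‖bv v‖^2 ≤ r^2 := by
    intro v hv
    have h1 := hA _ (hbvmem v hv)
    have h2 : 0 ≤ ‖bv v‖ := norm_nonneg _
    nlinarith
  -- expansion
  have S2 : ∑ v ∈ s, |c v| * ‖y + bv v - x‖^2
      = t0 * ‖y - x‖^2 + 2 * inner ℝ (y-x) x + ∑ v ∈ s, |c v| * ‖bv v‖^2 := by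
    have S1 : ∀ v ∈ s, |c v| * ‖y + bv v - x‖^2
        = |c v| * ‖y - x‖^2 + 2 * inner ℝ (y-x) (c v • z v) + |c v| * ‖bv v‖^2 := by
      intro v _
      rw [hψ (bv v), ← hsmul v, real_inner_smul_right]
      ring
    calc ∑ v ∈ s, |c v| * ‖y + bv v - x‖^2
        = ∑ v ∈ s, (|c v| * ‖y - x‖^2 + 2 * inner ℝ (y-x) (c v • z v) + |c v| * ‖bv v‖^2) :=
          Finset.sum_congr rfl S1
    _ = (∑ v ∈ s, |c v| * ‖y - x‖^2) + (∑ v ∈ s, 2 * inner ℝ (y-x) (c v • z v))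
          + ∑ v ∈ s, |c v| * ‖bv v‖^2 := by
          rw [Finset.sum_add_distrib, Finset.sum_add_distrib]
    _ = t0 * ‖y - x‖^2 + 2 * inner ℝ (y-x) x + ∑ v ∈ s, |c v| * ‖bv v‖^2 := by
          rw [← Finset.sum_mul, ← Finset.mul_sum, ← inner_sum]
  have S3 : ∑ v ∈ s, |c v| * ‖bv v‖^2 ≤ r^2 := by
    have h1 : ∑ v ∈ s, |c v| * ‖bv v‖^2 ≤ ∑ v ∈ s, |c v| * r^2 :=
      Finset.sum_le_sum fun v hv => mul_le_mul_of_nonneg_left (hnormbv v hv) (abs_nonneg _)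
    have h2 : ∑ v ∈ s, |c v| * r^2 = t0 * r^2 := by rw [← Finset.sum_mul]
    have h3 : (0:ℝ) ≤ r^2 := sq_nonneg r
    nlinarith
  have S5 : ‖y - x‖^2 + 2 * inner ℝ (y-x) x = ‖y‖^2 - ‖x‖^2 := by
    have := norm_add_sq_real (y - x) x
    rw [sub_add_cancel] at this
    linarith
  have hupper : ∑ v ∈ s, |c v| * ‖y + bv v - x‖^2 + (1 - t0) * ‖y + (0:V) - x‖^2
      ≤ ‖y‖^2 + r^2 := by
    have h0 : ‖y + (0:V) - x‖^2 = ‖y - x‖^2 := by rw [add_zero]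
    rw [S2, h0]
    have hx2 : (0:ℝ) ≤ ‖x‖^2 := sq_nonneg _
    nlinarith [S3, S5]
  -- min is below the average
  have h1 : t0 * ‖y + b0 - x‖^2 ≤ ∑ v ∈ s, |c v| * ‖y + bv v - x‖^2 := by
    rw [ht0, Finset.sum_mul]
    exact Finset.sum_le_sum fun v hv =>
      mul_le_mul_of_nonneg_left (hb0min _ (hbvmem v hv)) (abs_nonneg _)
  have h2 : (1 - t0) * ‖y + b0 - x‖^2 ≤ (1 - t0) * ‖y + (0:V) - x‖^2 :=
    mul_le_mul_of_nonneg_left (hb0min _ (zero_mem_symm0 A)) (by linarith)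
  nlinarith [h1, h2, hupper]

lemma maurey_exists (s : Finset ι) (c : ι → ℝ) (z : ι → V) (A : Finset V) (r : ℝ)
    (hz : ∀ v ∈ s, z v ∈ A) (hA : ∀ b ∈ symm0 A, ‖b‖ ≤ r)
    (hc1 : ∑ v ∈ s, |c v| ≤ 1) (k : ℕ) :
    ∃ f : Fin k → V, (∀ j, f j ∈ symm0 A) ∧
      ‖(∑ j, f j) - (k:ℝ) • (∑ v ∈ s, c v • z v)‖^2 ≤ (k:ℝ) * r^2 := by
  induction k with
  | zero =>
    refine ⟨fun j => j.elim0, fun j => j.elim0, ?_⟩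
    simp
  | succ k ih =>
    obtain ⟨f, hf, hb⟩ := ih
    set x := ∑ v ∈ s, c v • z v with hx
    obtain ⟨b, hbmem, hbb⟩ := avg_step s c z A r hz hA hc1 ((∑ j, f j) - (k:ℝ) • x)
    refine ⟨Fin.cons b f, ?_, ?_⟩
    · intro j
      refine Fin.cases ?_ ?_ j
      · exact hbmem
      · exact fun i => hf i
    · have heq : (∑ j, Fin.cons b f j) - ((k+1 : ℕ):ℝ) • x
          = ((∑ j, f j) - (k:ℝ) • x) + b - x := by
        rw [Fin.sum_cons]
        push_cast
        rw [add_smul, one_smul]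
        abel
      rw [heq]
      have : ((k:ℝ)+1) * r^2 = (k:ℝ) * r^2 + r^2 := by ring
      push_cast
      rw [this]
      exact hbb.trans (by linarith)

lemma maurey (s : Finset ι) (c : ι → ℝ) (z : ι → V) (A : Finset V) (r : ℝ) (hr : 0 ≤ r)
    (hz : ∀ v ∈ s, z v ∈ A) (hA : ∀ a ∈ A, ‖a‖ ≤ r)
    (hc1 : ∑ v ∈ s, |c v| ≤ 1) (k : ℕ) (hk : 1 ≤ k) :
    ∃ g ∈ symGrid A k, ‖(∑ v ∈ s, c v • z v) - g‖ ≤ r / Real.sqrt k := by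
  classical
  obtain ⟨f, hf, hb⟩ := maurey_exists s c z A r hz (norm_symm0_le hr hA) hc1 k
  set x := ∑ v ∈ s, c v • z v with hx
  refine ⟨(k:ℝ)⁻¹ • ∑ j, f j, ?_, ?_⟩
  · exact mem_symGrid_of f hf
  · have hk0 : (0:ℝ) < k := by exact_mod_cast hk
    have hsqk : (0:ℝ) < Real.sqrt k := Real.sqrt_pos.2 hk0
    have hnorm : ‖(∑ j, f j) - (k:ℝ) • x‖ ≤ Real.sqrt k * r := by
      have h1 : ‖(∑ j, f j) - (k:ℝ) • x‖ = Real.sqrt (‖(∑ j, f j) - (k:ℝ) • x‖^2) := by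
        rw [Real.sqrt_sq (norm_nonneg _)]
      rw [h1]
      calc Real.sqrt (‖(∑ j, f j) - (k:ℝ) • x‖^2) ≤ Real.sqrt ((k:ℝ) * r^2) :=
            Real.sqrt_le_sqrt hb
      _ = Real.sqrt k * r := by
            rw [Real.sqrt_mul (le_of_lt hk0), Real.sqrt_sq hr]
    have heq : x - (k:ℝ)⁻¹ • ∑ j, f j = -((k:ℝ)⁻¹ • ((∑ j, f j) - (k:ℝ) • x)) := by
      rw [smul_sub, smul_smul, inv_mul_cancel₀ (ne_of_gt hk0), one_smul]
      abel
    rw [heq, norm_neg, norm_smul, norm_inv, Real.norm_natCast]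
    calc ((k:ℝ))⁻¹ * ‖(∑ j, f j) - (k:ℝ) • x‖ ≤ ((k:ℝ))⁻¹ * (Real.sqrt k * r) := by
          exact mul_le_mul_of_nonneg_left hnorm (by positivity)
    _ = r / Real.sqrt k := by
          have h2 : Real.sqrt k * Real.sqrt k = (k:ℝ) := Real.mul_self_sqrt (le_of_lt hk0)
          rw [eq_div_iff (ne_of_gt hsqk)]
          calc ((k:ℝ))⁻¹ * (Real.sqrt k * r) * Real.sqrt k
              = ((k:ℝ))⁻¹ * (Real.sqrt k * Real.sqrt k) * r := by ring
          _ = r := by rw [h2]; field_simp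

end Maurey
end EntropyAux

namespace EntropyAux
section Head
open Finset

abbrev Euc (m : ℕ) : Type := EuclideanSpace ℝ {t : Node // t ∈ Elow m}

noncomputable def Yv (β : ℝ) (m : ℕ) (v : Node) : Euc m :=
  WithLp.toLp 2 fun t => if t.1 <+: v then Real.sqrt (wgt β t.1) else 0

lemma norm_sq_eval (m : ℕ) (x : Euc m) : ‖x‖^2 = ∑ t : {t : Node // t ∈ Elow m}, (x t)^2 := by
  rw [EuclideanSpace.norm_eq, Real.sq_sqrt (Finset.sum_nonneg fun t _ => sq_nonneg _)]
  exact Finset.sum_congr rfl fun t _ => by rw [Real.norm_eq_abs, sq_abs]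

lemma sum_wseq_le (hβ1 : 1 < β) {J : Finset ℕ} {M : ℕ} (hJ : ∀ j ∈ J, M ≤ j) :
    ∑ j ∈ J, wseq β j ≤ tailW β M := by
  have himg : ∑ i ∈ J.image (· - M), wseq β (M + i) = ∑ j ∈ J, wseq β (M + (j - M)) :=
    Finset.sum_image (by intro x hx y hy h; simp only at h; have := hJ x hx; have := hJ y hy; omega)
  have hcongr : ∑ j ∈ J, wseq β (M + (j - M)) = ∑ j ∈ J, wseq β j :=
    Finset.sum_congr rfl fun j hj => by rw [show M + (j - M) = j by have := hJ j hj; omega]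
  calc ∑ j ∈ J, wseq β j = ∑ i ∈ J.image (· - M), wseq β (M + i) := by rw [himg, hcongr]
  _ ≤ tailW β M := Summable.sum_le_tsum _ (fun i _ => (wseq_pos β _).le) (summable_wseq_shift hβ1 M)

lemma norm_sq_le_of_bound (hβ1 : 1 < β) (m M : ℕ) (x : Euc m) (v : Node)
    (hx : ∀ t : {t : Node // t ∈ Elow m},
      (x t)^2 ≤ (if t.1 <+: v ∧ M ≤ t.1.length then wseq β t.1.length else 0)) :
    ‖x‖^2 ≤ tailW β M := by
  classical
  rw [norm_sq_eval]
  have h1 : ∑ t : {t : Node // t ∈ Elow m}, (x t)^2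
      ≤ ∑ t : {t : Node // t ∈ Elow m},
          (if t.1 <+: v ∧ M ≤ t.1.length then wseq β t.1.length else 0) :=
    Finset.sum_le_sum fun t _ => hx t
  have h2 : ∑ t : {t : Node // t ∈ Elow m},
        (if t.1 <+: v ∧ M ≤ t.1.length then wseq β t.1.length else 0)
      = ∑ t ∈ (Elow m).filter (fun t => t <+: v ∧ M ≤ t.length), wseq β t.length := by
    calc ∑ t : {t : Node // t ∈ Elow m},
          (if t.1 <+: v ∧ M ≤ t.1.length then wseq β t.1.length else 0)
        = ∑ t ∈ Elow m, (if t <+: v ∧ M ≤ t.length then wseq β t.length else 0) :=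
          Finset.sum_coe_sort (Elow m)
            (fun a : Node => if a <+: v ∧ M ≤ a.length then wseq β a.length else 0)
    _ = ∑ t ∈ (Elow m).filter (fun t => t <+: v ∧ M ≤ t.length), wseq β t.length :=
          (Finset.sum_filter _ _).symm
  set S := (Elow m).filter (fun t => t <+: v ∧ M ≤ t.length) with hS
  have h3 : ∑ t ∈ S, wseq β t.length = ∑ j ∈ S.image List.length, wseq β j := by
    refine (Finset.sum_image ?_).symm
    intro a ha b hb hab
    simp only [hS, Finset.coe_filter, Set.mem_setOf_eq] at ha hb
    exact prefix_eq_of_len ha.2.1 hb.2.1 hab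
  have h4 : ∀ j ∈ S.image List.length, M ≤ j := by
    intro j hj
    obtain ⟨t, ht, rfl⟩ := Finset.mem_image.1 hj
    simp only [hS, Finset.mem_filter] at ht
    exact ht.2.2
  calc ∑ t : {t : Node // t ∈ Elow m}, (x t)^2
      ≤ ∑ t ∈ S, wseq β t.length := by rw [← h2] at *; exact h1
  _ = ∑ j ∈ S.image List.length, wseq β j := h3
  _ ≤ tailW β M := sum_wseq_le hβ1 h4

lemma Yv_norm_sq_le (hβ1 : 1 < β) (m : ℕ) (v : Node) : ‖Yv β m v‖^2 ≤ tailW β 0 := by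
  refine norm_sq_le_of_bound hβ1 m 0 (Yv β m v) v fun t => ?_
  by_cases h : t.1 <+: v
  · simp only [Yv, h, if_true, Nat.zero_le, and_true]
    rw [wgt_eq β t.1, Real.sq_sqrt (wseq_pos β _).le]
  · simp [Yv, h]

lemma Yv_diff_norm_sq_le (hβ1 : 1 < β) (m M : ℕ) (v : Node) :
    ‖Yv β m v - Yv β m (v.take M)‖^2 ≤ tailW β (M+1) := by
  refine norm_sq_le_of_bound hβ1 m (M+1) _ v fun t => ?_
  have happ : (Yv β m v - Yv β m (v.take M)) t = Yv β m v t - Yv β m (v.take M) t := rfl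
  rw [happ]
  by_cases h1 : t.1 <+: v.take M
  · have h2 : t.1 <+: v := h1.trans (List.take_prefix M v)
    simp only [Yv, h1, h2, if_true, sub_self]
    rw [zero_pow (by norm_num)]
    split_ifs with h3
    · exact (wseq_pos β _).le
    · exact le_rfl
  · by_cases h2 : t.1 <+: v
    · have hlen : M + 1 ≤ t.1.length := by
        by_contra hc
        exact h1 ((prefix_take_iff' (show (t.1:Node).length ≤ M by omega)).1 h2)
      simp only [Yv, h1, h2, if_true, if_false, sub_zero, hlen, and_true]
      rw [wgt_eq β t.1, Real.sq_sqrt (wseq_pos β _).le]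
    · have : ¬ (t.1 <+: v ∧ M + 1 ≤ t.1.length) := fun hc => h2 hc.1
      simp [Yv, h1, h2, this]

end Head
end EntropyAux

namespace EntropyAux
section Head2
open Finset
open scoped Classical

lemma le_sqrt_of_sq_le {a c : ℝ} (ha : 0 ≤ a) (h : a^2 ≤ c) : a ≤ Real.sqrt c := by
  nlinarith [Real.sq_sqrt (le_trans (sq_nonneg a) h), Real.sqrt_nonneg c]

noncomputable def stageA (β : ℝ) (m : ℕ) (i : ℕ) : Finset (Euc m) :=
  if i = 0 then (Elow 1).image (Yv β m)
  else (Elow (2^i)).image (fun w => Yv β m w - Yv β m (w.take (2^(i-1))))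

lemma stageA_zero (β : ℝ) (m : ℕ) : stageA β m 0 = (Elow 1).image (Yv β m) := if_pos rfl

lemma stageA_succ (β : ℝ) (m i : ℕ) :
    stageA β m (i+1) = (Elow (2^(i+1))).image (fun w => Yv β m w - Yv β m (w.take (2^i))) := by
  rw [stageA, if_neg (Nat.succ_ne_zero i)]
  norm_num

noncomputable def stageR (β : ℝ) : ℕ → ℝ
  | 0 => Real.sqrt (tailW β 0)
  | (i+1) => Real.sqrt (tailW β (2^i + 1))

lemma stageR_nonneg (β : ℝ) (i : ℕ) : 0 ≤ stageR β i := by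
  cases i <;> exact Real.sqrt_nonneg _

lemma stageA_norm {β : ℝ} (hβ1 : 1 < β) (m i : ℕ) :
    ∀ a ∈ stageA β m i, ‖a‖ ≤ stageR β i := by
  cases i with
  | zero =>
    intro a ha
    rw [stageA_zero] at ha
    obtain ⟨v, _, rfl⟩ := Finset.mem_image.1 ha
    exact le_sqrt_of_sq_le (norm_nonneg _) (Yv_norm_sq_le hβ1 m v)
  | succ i =>
    intro a ha
    rw [stageA_succ] at ha
    obtain ⟨w, _, rfl⟩ := Finset.mem_image.1 ha
    exact le_sqrt_of_sq_le (norm_nonneg _) (Yv_diff_norm_sq_le hβ1 m (2^i) w)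

lemma stageA_card (β : ℝ) (m i : ℕ) : (stageA β m i).card ≤ 2^(2^i + 1) := by
  cases i with
  | zero =>
    calc (stageA β m 0).card ≤ (Elow 1).card := by
          rw [stageA_zero]; exact Finset.card_image_le
    _ ≤ 2^(2^0 + 1) := card_Elow 1
  | succ i =>
    calc (stageA β m (i+1)).card ≤ (Elow (2^(i+1))).card := by
          rw [stageA_succ]; exact Finset.card_image_le
    _ ≤ 2^(2^(i+1) + 1) := card_Elow _

noncomputable def bigGrid (β : ℝ) (L : ℕ) (k : ℕ → ℕ) : Finset (Euc (2^L)) :=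
  (Fintype.piFinset fun i : Fin (L+1) => symGrid (stageA β (2^L) i) (k i)).image
    (fun f => ∑ i, f i)

lemma mem_bigGrid_of {β : ℝ} {L : ℕ} {k : ℕ → ℕ} (f : Fin (L+1) → Euc (2^L))
    (hf : ∀ i : Fin (L+1), f i ∈ symGrid (stageA β (2^L) i) (k i)) :
    (∑ i, f i) ∈ bigGrid β L k := by
  unfold bigGrid
  exact Finset.mem_image.2 ⟨f, Fintype.mem_piFinset.2 hf, rfl⟩

lemma bigGrid_card (β : ℝ) (L : ℕ) (k : ℕ → ℕ) :
    (bigGrid β L k).card ≤ 2^(∑ i ∈ range (L+1), (2^i + 3) * k i) := by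
  have h1 : (bigGrid β L k).card
      ≤ (Fintype.piFinset fun i : Fin (L+1) => symGrid (stageA β (2^L) i) (k i)).card := by
    unfold bigGrid
    exact Finset.card_image_le
  have h2 : (Fintype.piFinset fun i : Fin (L+1) => symGrid (stageA β (2^L) i) (k i)).card
      = ∏ i : Fin (L+1), (symGrid (stageA β (2^L) i) (k i)).card := Fintype.card_piFinset _
  have h3 : ∀ i : Fin (L+1), (symGrid (stageA β (2^L) i) (k i)).card ≤ (2^(2^(i:ℕ) + 3))^(k i) := by
    intro i
    refine (card_symGrid _ _).trans ?_
    refine Nat.pow_le_pow_left ?_ _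
    calc (symm0 (stageA β (2^L) i)).card ≤ 2 * (stageA β (2^L) i).card + 1 := card_symm0 _
    _ ≤ 2 * 2^(2^(i:ℕ) + 1) + 1 := by
        have := stageA_card β (2^L) i
        omega
    _ ≤ 2^(2^(i:ℕ) + 3) := by
        have h4 : (2:ℕ) * 2^(2^(i:ℕ) + 1) + 1 = 2^(2^(i:ℕ) + 2) + 1 := by ring
        have h5 : (1:ℕ) ≤ 2^(2^(i:ℕ) + 2) := Nat.one_le_two_pow
        have h6 : (2:ℕ)^(2^(i:ℕ) + 3) = 2^(2^(i:ℕ) + 2) + 2^(2^(i:ℕ) + 2) := by ring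
        omega
  calc (bigGrid β L k).card ≤ ∏ i : Fin (L+1), (symGrid (stageA β (2^L) i) (k i)).card := by
        rw [← h2]; exact h1
  _ ≤ ∏ i : Fin (L+1), (2^(2^(i:ℕ) + 3))^(k i) := Finset.prod_le_prod' fun i _ => h3 i
  _ = ∏ i : Fin (L+1), 2^((2^(i:ℕ) + 3) * (k i)) := by
        refine Finset.prod_congr rfl fun i _ => ?_
        rw [← pow_mul]
  _ = ∏ i ∈ range (L+1), 2^((2^i + 3) * (k i)) :=
        Fin.prod_univ_eq_prod_range (fun i => 2^((2^i + 3) * (k i))) (L+1)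
  _ = 2^(∑ i ∈ range (L+1), (2^i + 3) * k i) := Finset.prod_pow_eq_pow_sum _ _ _

lemma head_approx {β : ℝ} (hβ1 : 1 < β) (L : ℕ) (k : ℕ → ℕ) (hk : ∀ i, 1 ≤ k i)
    (c : Node → ℝ) (hc1 : ∑ v ∈ Elow (2^L), |c v| ≤ 1) :
    ∃ g ∈ bigGrid β L k,
      ‖(∑ v ∈ Elow (2^L), c v • Yv β (2^L) v) - g‖
        ≤ ∑ i ∈ range (L+1), stageR β i / Real.sqrt (k i) := by
  classical
  set m := 2^L with hm
  set G : ℕ → Node → Euc m := fun i v => Yv β m (v.take (2^i)) with hG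
  set Stage : ℕ → Euc m := fun i =>
    if i = 0 then ∑ v ∈ Elow m, c v • G 0 v
    else ∑ v ∈ Elow m, c v • (G i v - G (i-1) v) with hStage
  have hstage0 : Stage 0 = ∑ v ∈ Elow m, c v • G 0 v := by simp [hStage]
  have hstagei : ∀ i : ℕ, Stage (i+1) = ∑ v ∈ Elow m, c v • (G (i+1) v - G i v) := by
    intro i; simp [hStage]
  have hdecomp : (∑ v ∈ Elow m, c v • Yv β m v) = ∑ i ∈ range (L+1), Stage i := by
    rw [Finset.sum_range_succ']
    have h1 : ∑ i ∈ range L, Stage (i+1) = ∑ v ∈ Elow m, c v • (G L v - G 0 v) := by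
      calc ∑ i ∈ range L, Stage (i+1)
          = ∑ i ∈ range L, ∑ v ∈ Elow m, c v • (G (i+1) v - G i v) :=
            Finset.sum_congr rfl fun i _ => hstagei i
      _ = ∑ v ∈ Elow m, ∑ i ∈ range L, c v • (G (i+1) v - G i v) := Finset.sum_comm
      _ = ∑ v ∈ Elow m, c v • (G L v - G 0 v) := by
            refine Finset.sum_congr rfl fun v _ => ?_
            rw [← Finset.smul_sum, Finset.sum_range_sub (fun i => G i v)]
    rw [h1, hstage0, ← Finset.sum_add_distrib]
    refine (Finset.sum_congr rfl fun v hv => ?_).symm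
    rw [← smul_add, sub_add_cancel]
    have hv' : (v : Node).take (2^L) = v := List.take_of_length_le (mem_Elow.1 hv)
    rw [hG]
    simp only []
    rw [hv']
  have hch : ∀ i : Fin (L+1), ∃ g, g ∈ symGrid (stageA β m i) (k i) ∧
      ‖Stage i - g‖ ≤ stageR β i / Real.sqrt (k i) := by
    rintro ⟨i, hi⟩
    cases i with
    | zero =>
      have hz : ∀ v ∈ Elow m, G 0 v ∈ stageA β m 0 := by
        intro v _
        rw [stageA_zero]
        refine Finset.mem_image.2 ⟨v.take (2^0), mem_Elow.2 ?_, rfl⟩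
        rw [List.length_take]; omega
      obtain ⟨g, hg, hb⟩ := maurey (Elow m) c (fun v => G 0 v) (stageA β m 0) (stageR β 0)
        (stageR_nonneg β 0) hz (stageA_norm hβ1 m 0) hc1 (k 0) (hk 0)
      exact ⟨g, hg, by rw [show ((⟨0, hi⟩ : Fin (L+1)) : ℕ) = 0 from rfl, hstage0]; exact hb⟩
    | succ i =>
      have hz : ∀ v ∈ Elow m, (G (i+1) v - G i v) ∈ stageA β m (i+1) := by
        intro v _
        rw [stageA_succ]
        refine Finset.mem_image.2 ⟨v.take (2^(i+1)), mem_Elow.2 ?_, ?_⟩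
        · rw [List.length_take]; omega
        · have htt : (v.take (2^(i+1))).take (2^i) = v.take (2^i) := by
            rw [List.take_take]
            congr 1
            exact min_eq_left (Nat.pow_le_pow_right (by norm_num) (by omega))
          rw [htt]
      obtain ⟨g, hg, hb⟩ := maurey (Elow m) c (fun v => G (i+1) v - G i v) (stageA β m (i+1))
        (stageR β (i+1)) (stageR_nonneg β (i+1)) hz (stageA_norm hβ1 m (i+1)) hc1
        (k (i+1)) (hk (i+1))
      exact ⟨g, hg, by rw [show ((⟨i+1, hi⟩ : Fin (L+1)) : ℕ) = i+1 from rfl, hstagei i]; exact hb⟩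
  choose gf hgmem hgb using hch
  refine ⟨∑ i, gf i, mem_bigGrid_of gf hgmem, ?_⟩
  have hX : (∑ v ∈ Elow m, c v • Yv β m v) = ∑ i : Fin (L+1), Stage i := by
    rw [hdecomp, ← Fin.sum_univ_eq_sum_range Stage (L+1)]
  calc ‖(∑ v ∈ Elow m, c v • Yv β m v) - ∑ i, gf i‖
      = ‖∑ i : Fin (L+1), (Stage i - gf i)‖ := by
        rw [hX, ← Finset.sum_sub_distrib]
  _ ≤ ∑ i : Fin (L+1), ‖Stage i - gf i‖ := norm_sum_le _ _
  _ ≤ ∑ i : Fin (L+1), stageR β i / Real.sqrt (k i) := Finset.sum_le_sum fun i _ => hgb i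
  _ = ∑ i ∈ range (L+1), stageR β i / Real.sqrt (k i) :=
        Fin.sum_univ_eq_sum_range (fun i => stageR β i / Real.sqrt (k i)) (L+1)

end Head2
end EntropyAux

namespace EntropyAux
section Glue
open Finset
open scoped Classical

variable {β : ℝ}

noncomputable def PhiV (β : ℝ) (μ : Node → ℝ) (m : ℕ) : Euc m :=
  WithLp.toLp 2 fun t => Real.sqrt (wgt β t.1) * Vstar μ t.1

noncomputable def Psi (β : ℝ) (m : ℕ) (g : Euc m) : Node → ℝ :=
  fun t => if h : t ∈ Elow m then (Real.sqrt (wgt β t))⁻¹ * g ⟨t, h⟩ else 0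

lemma wgt_pos (β : ℝ) (t : Node) : 0 < wgt β t := by
  rw [wgt_eq]; exact wseq_pos β _

lemma sqrt_wgt_pos (β : ℝ) (t : Node) : 0 < Real.sqrt (wgt β t) :=
  Real.sqrt_pos.2 (wgt_pos β t)

lemma PhiV_eq_sum {μ : Node → ℝ} (hμ : Summable fun u : Node => |μ u|) (m : ℕ) :
    PhiV β μ m = ∑ v ∈ Elow m, pushC μ m v • Yv β m v := by
  ext t
  have h1 : (∑ v ∈ Elow m, pushC μ m v • Yv β m v) t
      = ∑ v ∈ Elow m, pushC μ m v * (Yv β m v t) := by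
    rw [WithLp.ofLp_sum, Finset.sum_apply]
    exact Finset.sum_congr rfl fun v _ => rfl
  rw [PhiV, h1, WithLp.ofLp_toLp]
  have ht : (t.1 : Node).length ≤ m := mem_Elow.1 t.2
  rw [Vstar_eq_push hμ m ht, Finset.mul_sum]
  refine Finset.sum_congr rfl fun v _ => ?_
  by_cases h : t.1 <+: v <;> simp [Yv, h] <;> ring

lemma distSq_split (μ : Node → ℝ) (m : ℕ) (g : Euc m) :
    distSqW β (Vstar μ) (Psi β m g)
      = ENNReal.ofReal (‖PhiV β μ m - g‖^2)
        + ∑' t : ↑((↑(Elow m) : Set Node)ᶜ), ENNReal.ofReal (wgt β t.1 * (Vstar μ t.1)^2) := by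
  set F : Node → ℝ≥0∞ := fun t => ENNReal.ofReal (wgt β t * (Vstar μ t - Psi β m g t)^2) with hF
  have hsplit : ∑' t : ↑(↑(Elow m) : Set Node), F t.1 + ∑' t : ↑((↑(Elow m) : Set Node)ᶜ), F t.1
      = ∑' t : Node, F t :=
    Summable.tsum_add_tsum_compl (s := (↑(Elow m) : Set Node)) ENNReal.summable ENNReal.summable
  have hhead : ∑' t : ↑(↑(Elow m) : Set Node), F t.1 = ENNReal.ofReal (‖PhiV β μ m - g‖^2) := by
    have e1 : ∑' t : ↑(↑(Elow m) : Set Node), F t.1 = ∑ t ∈ Elow m, F t :=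
      Finset.tsum_subtype (Elow m) F
    rw [e1, ← ENNReal.ofReal_sum_of_nonneg
      (fun t _ => mul_nonneg (wgt_pos β t).le (sq_nonneg _))]
    congr 1
    rw [norm_sq_eval]
    rw [← Finset.sum_coe_sort (Elow m) (fun t => wgt β t * (Vstar μ t - Psi β m g t)^2)]
    refine Finset.sum_congr rfl fun t _ => ?_
    have happly : (PhiV β μ m - g) t = Real.sqrt (wgt β t.1) * Vstar μ t.1 - g t := rfl
    have hpsi : Psi β m g t.1 = (Real.sqrt (wgt β t.1))⁻¹ * g ⟨t.1, t.2⟩ := dif_pos t.2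
    rw [happly, hpsi]
    set s := Real.sqrt (wgt β t.1) with hs
    have hs2 : s^2 = wgt β t.1 := Real.sq_sqrt (wgt_pos β t.1).le
    have hs0 : s ≠ 0 := (sqrt_wgt_pos β t.1).ne'
    have hgt : g ⟨t.1, t.2⟩ = g t := by congr
    rw [hgt]
    calc wgt β t.1 * (Vstar μ t.1 - s⁻¹ * g t)^2
        = (s * (Vstar μ t.1 - s⁻¹ * g t))^2 := by rw [mul_pow, hs2]
    _ = (s * Vstar μ t.1 - g t)^2 := by
        rw [mul_sub, mul_inv_cancel_left₀ hs0]
  have htail : ∑' t : ↑((↑(Elow m) : Set Node)ᶜ), F t.1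
      = ∑' t : ↑((↑(Elow m) : Set Node)ᶜ), ENNReal.ofReal (wgt β t.1 * (Vstar μ t.1)^2) := by
    refine tsum_congr fun t => ?_
    have hnot : ¬ (t.1 ∈ Elow m) := t.2
    have hpsi : Psi β m g t.1 = 0 := dif_neg hnot
    rw [hF]
    simp only [hpsi, sub_zero]
  rw [distSqW, ← hsplit, hhead, htail]

def shiftEquiv (M : ℕ) : ℕ ≃ {k : ℕ // M ≤ k} :=
  ⟨fun j => ⟨M + j, Nat.le_add_right _ _⟩, fun k => k.1 - M,
    fun j => by simp, fun k => Subtype.ext (by have := k.2; simp only []; omega)⟩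

lemma tsum_level_le {μ : Node → ℝ} (hβ1 : 1 < β) (hμ : Summable fun u : Node => |μ u|)
    (h1 : l1Norm μ ≤ 1) (M : ℕ) :
    ∑' t : Node, (if M ≤ t.length then ENNReal.ofReal (wgt β t * (Vstar μ t)^2) else 0)
      ≤ ENNReal.ofReal (tailW β M) := by
  set G : Node → ℝ≥0∞ :=
    fun t => if M ≤ t.length then ENNReal.ofReal (wgt β t * (Vstar μ t)^2) else 0 with hG
  set e := Equiv.sigmaFiberEquiv (fun t : Node => t.length) with he
  have h2 : ∑' t : Node, G t = ∑' (k : ℕ) (t : {t : Node // t.length = k}), G t.1 := by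
    rw [← Equiv.tsum_eq e G]
    exact ENNReal.tsum_sigma' (fun p => G (e p))
  have h3 : ∀ k : ℕ, (∑' t : {t : Node // t.length = k}, G t.1)
      ≤ if M ≤ k then ENNReal.ofReal (wseq β k) else 0 := by
    intro k
    by_cases hk : M ≤ k
    · rw [if_pos hk]
      have h4 : ∀ t : {t : Node // t.length = k},
          G t.1 = ENNReal.ofReal (wseq β k * (Vstar μ t.1)^2) := by
        intro t
        rw [hG]
        simp only [t.2, hk, if_true]
        rw [wgt_eq, t.2]
      rw [tsum_congr h4, tsum_fintype]
      rw [← ENNReal.ofReal_sum_of_nonneg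
        (fun t _ => mul_nonneg (wseq_pos β k).le (sq_nonneg _))]
      refine ENNReal.ofReal_le_ofReal ?_
      rw [← Finset.mul_sum]
      have h5 : ∑ t : {t : Node // t.length = k}, (Vstar μ t.1)^2
          = ∑ t ∈ levFin k, (Vstar μ t)^2 :=
        (Finset.sum_subtype (levFin k) (fun t => mem_levFin) (fun t => (Vstar μ t)^2)).symm
      rw [h5]
      calc wseq β k * ∑ t ∈ levFin k, (Vstar μ t)^2 ≤ wseq β k * 1 :=
            mul_le_mul_of_nonneg_left (level_sq_bound hμ h1 k) (wseq_pos β k).le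
      _ = wseq β k := mul_one _
    · rw [if_neg hk]
      have h4 : ∀ t : {t : Node // t.length = k}, G t.1 = 0 := by
        intro t
        rw [hG]
        simp only [t.2, hk, if_false]
      rw [tsum_congr h4]
      exact le_of_eq tsum_zero
  have h6 : ∑' k : ℕ, (if M ≤ k then ENNReal.ofReal (wseq β k) else 0)
      = ENNReal.ofReal (tailW β M) := by
    set H : ℕ → ℝ≥0∞ := fun k => if M ≤ k then ENNReal.ofReal (wseq β k) else 0 with hH
    have hsupp : Function.support H ⊆ {k : ℕ | M ≤ k} := by
      intro k hk
      by_contra hc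
      simp only [Set.mem_setOf_eq] at hc
      exact hk (by simp [hH, hc])
    calc ∑' k : ℕ, H k = ∑' k : {k : ℕ // M ≤ k}, H k.1 :=
          (tsum_subtype_eq_of_support_subset hsupp).symm
    _ = ∑' j : ℕ, H ((shiftEquiv M) j).1 :=
          (Equiv.tsum_eq (shiftEquiv M) (fun k : {k : ℕ // M ≤ k} => H k.1)).symm
    _ = ∑' j : ℕ, ENNReal.ofReal (wseq β (M + j)) := by
          refine tsum_congr fun j => ?_
          have hj : ((shiftEquiv M) j).1 = M + j := rfl
          rw [hH]
          simp [hj, Nat.le_add_right]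
    _ = ENNReal.ofReal (tailW β M) := by
          rw [tailW, ENNReal.ofReal_tsum_of_nonneg (fun j => (wseq_pos β _).le)
            (summable_wseq_shift hβ1 M)]
  calc ∑' t : Node, G t = ∑' (k : ℕ) (t : {t : Node // t.length = k}), G t.1 := h2
  _ ≤ ∑' k : ℕ, (if M ≤ k then ENNReal.ofReal (wseq β k) else 0) := ENNReal.tsum_le_tsum h3
  _ = ENNReal.ofReal (tailW β M) := h6

lemma tail_part_le {μ : Node → ℝ} (hβ1 : 1 < β) (hμ : Summable fun u : Node => |μ u|)
    (h1 : l1Norm μ ≤ 1) (m : ℕ) :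
    ∑' t : ↑((↑(Elow m) : Set Node)ᶜ), ENNReal.ofReal (wgt β t.1 * (Vstar μ t.1)^2)
      ≤ ENNReal.ofReal (tailW β (m+1)) := by
  set F : Node → ℝ≥0∞ := fun t => ENNReal.ofReal (wgt β t * (Vstar μ t)^2) with hF
  have h2 : ∑' t : ↑((↑(Elow m) : Set Node)ᶜ), F t.1
      = ∑' t : Node, ((↑(Elow m) : Set Node)ᶜ).indicator F t :=
    tsum_subtype _ F
  rw [h2]
  refine le_trans (ENNReal.tsum_le_tsum (g := fun t =>
    if m+1 ≤ t.length then ENNReal.ofReal (wgt β t * (Vstar μ t)^2) else 0) fun t => ?_)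
    (tsum_level_le hβ1 hμ h1 (m+1))
  rw [Set.indicator_apply]
  by_cases ht : t ∈ (↑(Elow m) : Set Node)ᶜ
  · rw [if_pos ht]
    have : m + 1 ≤ t.length := by
      have : ¬ (t ∈ Elow m) := ht
      rw [mem_Elow] at this
      omega
    exact le_of_eq (by simp [hF, this])
  · rw [if_neg ht]
    exact zero_le

lemma total_le {μ : Node → ℝ} (hβ1 : 1 < β) (hμ : Summable fun u : Node => |μ u|)
    (h1 : l1Norm μ ≤ 1) :
    distSqW β (Vstar μ) (fun _ => 0) ≤ ENNReal.ofReal (tailW β 0) := by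
  rw [distSqW]
  refine le_trans (le_of_eq (tsum_congr fun t => ?_)) (tsum_level_le hβ1 hμ h1 0)
  rw [if_pos (Nat.zero_le _), sub_zero]

end Glue
end EntropyAux

namespace EntropyAux
section Cover
open Finset
open scoped Classical

variable {β : ℝ}

lemma cover_L (hβ1 : 1 < β) (L : ℕ) (k : ℕ → ℕ) (hk : ∀ i, 1 ≤ k i) :
    ∃ N : Finset (Node → ℝ), N.card ≤ 2^(∑ i ∈ range (L+1), (2^i+3) * k i) ∧
      ∀ μ : Node → ℝ, MemL1 μ → l1Norm μ ≤ 1 → ∃ g ∈ N, distSqW β (Vstar μ) g ≤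
        ENNReal.ofReal ((∑ i ∈ range (L+1), stageR β i / Real.sqrt (k i))^2
          + tailW β (2^L + 1)) := by
  refine ⟨(bigGrid β L k).image (Psi β (2^L)), ?_, ?_⟩
  · exact Finset.card_image_le.trans (bigGrid_card β L k)
  · intro μ hμ h1
    have hc1 : ∑ v ∈ Elow (2^L), |pushC μ (2^L) v| ≤ 1 := by
      calc ∑ v ∈ Elow (2^L), |pushC μ (2^L) v|
          ≤ ∑ v ∈ Elow (2^L), pushCabs μ (2^L) v :=
            Finset.sum_le_sum fun v _ => abs_pushC_le hμ (2^L) v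
      _ ≤ l1Norm μ := sum_pushCabs_le hμ (2^L)
      _ ≤ 1 := h1
    obtain ⟨gE, hgEmem, hgE⟩ := head_approx hβ1 L k hk (pushC μ (2^L)) hc1
    refine ⟨Psi β (2^L) gE, Finset.mem_image_of_mem _ hgEmem, ?_⟩
    rw [distSq_split μ (2^L) gE]
    set errH := ∑ i ∈ range (L+1), stageR β i / Real.sqrt (k i) with herr
    have herrnn : 0 ≤ errH :=
      Finset.sum_nonneg fun i _ => div_nonneg (stageR_nonneg β i) (Real.sqrt_nonneg _)
    have hhead : ENNReal.ofReal (‖PhiV β μ (2^L) - gE‖^2) ≤ ENNReal.ofReal (errH^2) := by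
      refine ENNReal.ofReal_le_ofReal ?_
      have hn : ‖PhiV β μ (2^L) - gE‖ ≤ errH := by
        rw [PhiV_eq_sum hμ (2^L)]
        exact hgE
      nlinarith [norm_nonneg (PhiV β μ (2^L) - gE)]
    have htail := tail_part_le hβ1 hμ h1 (2^L)
    calc ENNReal.ofReal (‖PhiV β μ (2^L) - gE‖^2)
          + ∑' t : ↑((↑(Elow (2^L)) : Set Node)ᶜ), ENNReal.ofReal (wgt β t.1 * (Vstar μ t.1)^2)
        ≤ ENNReal.ofReal (errH^2) + ENNReal.ofReal (tailW β (2^L + 1)) := add_le_add hhead htail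
    _ = ENNReal.ofReal (errH^2 + tailW β (2^L + 1)) :=
        (ENNReal.ofReal_add (by positivity) (tailW_nonneg β _)).symm

end Cover
end EntropyAux

namespace EntropyAux
section Arith
open Finset

variable {β : ℝ}

noncomputable def qq (β : ℝ) : ℝ := (2:ℝ)^((2-β)/4)
noncomputable def rhog (β : ℝ) : ℝ := (2:ℝ)^(β/2 - 1)
noncomputable def Kgeo (β : ℝ) : ℝ := 1/(1 - rhog β)
noncomputable def K1 (β : ℝ) : ℝ := Real.sqrt (cw β * (2:ℝ)^(β-1)) * (qq β/(qq β - 1))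
noncomputable def Dn (β : ℝ) : ℕ := ⌈8 * Kgeo β⌉₊ + 1
noncomputable def kf (β : ℝ) (L i : ℕ) : ℕ := ⌈(2:ℝ)^((β/2) * ((L:ℝ) - (i:ℝ)))⌉₊

lemma one_lt_qq (hβ2 : β < 2) : 1 < qq β := by
  rw [qq, show (1:ℝ) = (2:ℝ)^(0:ℝ) by rw [Real.rpow_zero]]
  exact Real.rpow_lt_rpow_of_exponent_lt one_lt_two (by linarith)

lemma rhog_pos : 0 < rhog β := Real.rpow_pos_of_pos two_pos _

lemma rhog_lt_one (hβ2 : β < 2) : rhog β < 1 :=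
  Real.rpow_lt_one_of_one_lt_of_neg one_lt_two (by linarith)

lemma Kgeo_pos (hβ2 : β < 2) : 0 < Kgeo β :=
  div_pos one_pos (by have := rhog_lt_one (β := β) hβ2; linarith)

lemma K1_nonneg (hβ2 : β < 2) : 0 ≤ K1 β := by
  have h := one_lt_qq (β := β) hβ2
  exact mul_nonneg (Real.sqrt_nonneg _) (div_nonneg (by linarith) (by linarith))

lemma Dn_ge (hβ2 : β < 2) : 8 * Kgeo β ≤ (Dn β : ℝ) := by
  rw [Dn]
  push_cast
  have := Nat.le_ceil (8 * Kgeo β)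
  linarith

lemma Dn_pos : 1 ≤ Dn β := by rw [Dn]; omega

lemma kf_ge_one (β : ℝ) (L i : ℕ) : 1 ≤ kf β L i :=
  Nat.one_le_iff_ne_zero.2 (by
    rw [kf]
    have := Real.rpow_pos_of_pos (two_pos) ((β/2) * ((L:ℝ) - (i:ℝ)))
    positivity)

lemma two_rpow_natCast_pow (i : ℕ) (a : ℝ) : ((2:ℝ)^(a))^i = (2:ℝ)^(a * i) := by
  rw [← Real.rpow_natCast ((2:ℝ)^a) i, ← Real.rpow_mul (by norm_num : (0:ℝ) ≤ 2)]

lemma budget (hβ1 : 1 < β) (hβ2 : β < 2) (L : ℕ) :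
    (∑ i ∈ range (L+1), (2^i+3) * kf β L i) ≤ Dn β * 2^L := by
  have key : ((∑ i ∈ range (L+1), (2^i+3) * kf β L i : ℕ) : ℝ) ≤ (Dn β : ℝ) * 2^L := by
    push_cast
    have hterm : ∀ i ∈ range (L+1),
        ((2:ℝ)^i + 3) * (kf β L i : ℝ) ≤ 8 * ((2:ℝ)^L * rhog β^(L-i)) := by
      intro i hi
      have hiL : i ≤ L := by simp at hi; omega
      have hexp0 : (0:ℝ) ≤ (β/2) * ((L:ℝ) - (i:ℝ)) := by
        have : (i:ℝ) ≤ (L:ℝ) := by exact_mod_cast hiL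
        nlinarith
      have hrone : (1:ℝ) ≤ (2:ℝ)^((β/2) * ((L:ℝ) - (i:ℝ))) := by
        rw [show (1:ℝ) = (2:ℝ)^(0:ℝ) by rw [Real.rpow_zero]]
        exact Real.rpow_le_rpow_of_exponent_le one_le_two hexp0
      have hki : (kf β L i : ℝ) ≤ 2 * (2:ℝ)^((β/2) * ((L:ℝ) - (i:ℝ))) := by
        rw [kf]
        have h1 := Nat.ceil_lt_add_one (le_trans zero_le_one hrone)
        linarith
      have hpow3 : (2:ℝ)^i + 3 ≤ 4 * (2:ℝ)^i := by
        have : (1:ℝ) ≤ (2:ℝ)^i := one_le_pow₀ (by norm_num)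
        linarith
      have hid : (2:ℝ)^i * (2:ℝ)^((β/2) * ((L:ℝ) - (i:ℝ))) = (2:ℝ)^L * rhog β^(L-i) := by
        rw [rhog, two_rpow_natCast_pow]
        rw [← Real.rpow_natCast (2:ℝ) i, ← Real.rpow_natCast (2:ℝ) L]
        rw [← Real.rpow_add two_pos, ← Real.rpow_add two_pos]
        congr 1
        have hc : ((L - i : ℕ) : ℝ) = (L:ℝ) - (i:ℝ) := by
          push_cast [hiL]
          ring
        rw [hc]
        ring
      calc ((2:ℝ)^i + 3) * (kf β L i : ℝ)
          ≤ (4 * (2:ℝ)^i) * (2 * (2:ℝ)^((β/2) * ((L:ℝ) - (i:ℝ)))) := by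
            have h2i : (0:ℝ) < (2:ℝ)^i := by positivity
            have hknn : (0:ℝ) ≤ (kf β L i : ℝ) := Nat.cast_nonneg _
            nlinarith
      _ = 8 * ((2:ℝ)^i * (2:ℝ)^((β/2) * ((L:ℝ) - (i:ℝ)))) := by ring
      _ = 8 * ((2:ℝ)^L * rhog β^(L-i)) := by rw [hid]
    have hsum : ∑ i ∈ range (L+1), ((2:ℝ)^i + 3) * (kf β L i : ℝ)
        ≤ 8 * (2:ℝ)^L * ∑ i ∈ range (L+1), rhog β^(L-i) := by
      rw [Finset.mul_sum]
      refine Finset.sum_le_sum fun i hi => (hterm i hi).trans (le_of_eq (by ring))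
    have hreflect : ∑ i ∈ range (L+1), rhog β^(L-i) = ∑ j ∈ range (L+1), rhog β^j := by
      rw [← Finset.sum_range_reflect (fun j => rhog β^j) (L+1)]
      simp
    have hgeo : ∑ j ∈ range (L+1), rhog β^j ≤ Kgeo β := by
      have hr1 : rhog β < 1 := rhog_lt_one hβ2
      have hrpos : 0 < rhog β := rhog_pos
      have h1r : (0:ℝ) < 1 - rhog β := by linarith
      have hpw : 0 ≤ rhog β^(L+1) := by positivity
      rw [geom_sum_eq (by linarith : rhog β ≠ 1), Kgeo]
      have heq : (rhog β^(L+1) - 1)/(rhog β - 1) = (1 - rhog β^(L+1))/(1 - rhog β) := by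
        rw [div_eq_div_iff (by linarith) (by linarith)]
        ring
      rw [heq]
      gcongr
      linarith
    calc ∑ i ∈ range (L+1), ((2:ℝ)^i + 3) * (kf β L i : ℝ)
        ≤ 8 * (2:ℝ)^L * ∑ i ∈ range (L+1), rhog β^(L-i) := hsum
    _ = 8 * (2:ℝ)^L * ∑ j ∈ range (L+1), rhog β^j := by rw [hreflect]
    _ ≤ 8 * (2:ℝ)^L * Kgeo β := by
        have : (0:ℝ) ≤ 8 * (2:ℝ)^L := by positivity
        exact mul_le_mul_of_nonneg_left hgeo this
    _ ≤ (Dn β : ℝ) * 2^L := by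
        have h1 := Dn_ge (β := β) hβ2
        have h2 : (0:ℝ) < (2:ℝ)^L := by positivity
        nlinarith
  have key2 : ((∑ i ∈ range (L+1), (2^i+3) * kf β L i : ℕ) : ℝ) ≤ ((Dn β * 2^L : ℕ) : ℝ) := by
    push_cast
    push_cast at key
    linarith
  exact_mod_cast key2

end Arith
end EntropyAux

namespace EntropyAux
section Arith2
open Finset
variable {β : ℝ}

lemma rpow_natpow_base (L : ℕ) (a : ℝ) : ((2:ℝ)^L)^a = (2:ℝ)^((L:ℝ)*a) := by
  rw [← Real.rpow_natCast (2:ℝ) L, ← Real.rpow_mul (by norm_num)]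

lemma tail2_le (hβ1 : 1 < β) (L : ℕ) :
    tailW β (2^L + 1) ≤ cw β * (2:ℝ)^((L:ℝ)*(1-β)) := by
  have h1 := tailW_le hβ1 (M := 2^L + 1) (Nat.le_add_left 1 (2^L))
  have hcast : ((2^L + 1 : ℕ):ℝ) = (2:ℝ)^L + 1 := by push_cast; ring
  have h2 : ((2^L+1:ℕ):ℝ)^(1-β) ≤ ((2:ℝ)^L)^(1-β) := by
    rw [hcast]
    refine Real.rpow_le_rpow_of_nonpos (by positivity) (by linarith) (by linarith)
  have hcw := (cw_pos hβ1).le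
  calc tailW β (2^L+1) ≤ cw β * ((2^L+1:ℕ):ℝ)^(1-β) := h1
  _ ≤ cw β * ((2:ℝ)^L)^(1-β) := mul_le_mul_of_nonneg_left h2 hcw
  _ = cw β * (2:ℝ)^((L:ℝ)*(1-β)) := by rw [rpow_natpow_base]

lemma one_le_two_rpow {a : ℝ} (ha : 0 ≤ a) : (1:ℝ) ≤ (2:ℝ)^a := by
  rw [show (1:ℝ) = (2:ℝ)^(0:ℝ) from (Real.rpow_zero 2).symm]
  exact Real.rpow_le_rpow_of_exponent_le one_le_two ha

lemma stageR_le (hβ1 : 1 < β) (i : ℕ) :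
    stageR β i ≤ Real.sqrt (cw β * (2:ℝ)^(β-1) * (2:ℝ)^((i:ℝ)*(1-β))) := by
  have hcw := (cw_pos hβ1).le
  cases i with
  | zero =>
    rw [stageR]
    refine Real.sqrt_le_sqrt ?_
    have h1 : (1:ℝ) ≤ (2:ℝ)^(β-1) := one_le_two_rpow (by linarith)
    simp only [Nat.cast_zero, zero_mul, Real.rpow_zero, mul_one]
    have hcweq : tailW β 0 = cw β := rfl
    nlinarith
  | succ i =>
    rw [stageR]
    refine Real.sqrt_le_sqrt ?_
    have h1 := tailW_le hβ1 (M := 2^i + 1) (Nat.le_add_left 1 (2^i))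
    have hcast : ((2^i + 1:ℕ):ℝ) = (2:ℝ)^i + 1 := by push_cast; ring
    have h2 : ((2^i+1:ℕ):ℝ)^(1-β) ≤ (2:ℝ)^((i:ℝ)*(1-β)) := by
      rw [hcast, ← rpow_natpow_base]
      exact Real.rpow_le_rpow_of_nonpos (by positivity) (by linarith) (by linarith)
    calc tailW β (2^i+1) ≤ cw β * ((2^i+1:ℕ):ℝ)^(1-β) := h1
    _ ≤ cw β * (2:ℝ)^((i:ℝ)*(1-β)) := mul_le_mul_of_nonneg_left h2 hcw
    _ = cw β * (2:ℝ)^(β-1) * (2:ℝ)^(((i+1:ℕ):ℝ)*(1-β)) := by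
        rw [mul_assoc, ← Real.rpow_add two_pos]
        congr 2
        push_cast
        ring

lemma err_le (hβ1 : 1 < β) (hβ2 : β < 2) (L : ℕ) :
    ∑ i ∈ range (L+1), stageR β i / Real.sqrt (kf β L i)
      ≤ K1 β * (2:ℝ)^(-(L:ℝ)*((β-1)/2)) := by
  have hq := one_lt_qq (β := β) hβ2
  have hcw := (cw_pos hβ1).le
  have hc2 : (0:ℝ) ≤ cw β * (2:ℝ)^(β-1) := by positivity
  have hden : ∀ i : ℕ, (2:ℝ)^((β/4)*((L:ℝ)-(i:ℝ))) ≤ Real.sqrt (kf β L i) := by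
    intro i
    have h1 : (2:ℝ)^((β/2)*((L:ℝ)-(i:ℝ))) ≤ (kf β L i : ℝ) := Nat.le_ceil _
    have h3 : Real.sqrt ((2:ℝ)^((β/2)*((L:ℝ)-(i:ℝ)))) = (2:ℝ)^((β/4)*((L:ℝ)-(i:ℝ))) := by
      rw [Real.sqrt_eq_rpow, ← Real.rpow_mul (by norm_num)]
      congr 1
      ring
    rw [← h3]
    exact Real.sqrt_le_sqrt h1
  have hterm : ∀ i ∈ range (L+1), stageR β i / Real.sqrt (kf β L i)
      ≤ Real.sqrt (cw β * (2:ℝ)^(β-1)) * ((2:ℝ)^(-(β/4)*(L:ℝ)) * qq β^i) := by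
    intro i _
    have hnum := stageR_le hβ1 i
    have hsplit : Real.sqrt (cw β * (2:ℝ)^(β-1) * (2:ℝ)^((i:ℝ)*(1-β)))
        = Real.sqrt (cw β * (2:ℝ)^(β-1)) * (2:ℝ)^((i:ℝ)*(1-β)/2) := by
      rw [Real.sqrt_mul hc2]
      congr 1
      rw [Real.sqrt_eq_rpow, ← Real.rpow_mul (by norm_num)]
      congr 1
      ring
    have hdpos : (0:ℝ) < (2:ℝ)^((β/4)*((L:ℝ)-(i:ℝ))) := Real.rpow_pos_of_pos two_pos _
    have hdiv : stageR β i / Real.sqrt (kf β L i)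
        ≤ (Real.sqrt (cw β * (2:ℝ)^(β-1)) * (2:ℝ)^((i:ℝ)*(1-β)/2))
            / (2:ℝ)^((β/4)*((L:ℝ)-(i:ℝ))) := by
      refine div_le_div₀ (by positivity) (hnum.trans_eq hsplit) hdpos (hden i)
    refine hdiv.trans (le_of_eq ?_)
    rw [mul_div_assoc, ← Real.rpow_sub two_pos]
    congr 1
    rw [qq, two_rpow_natCast_pow, ← Real.rpow_add two_pos]
    congr 1
    ring
  have hgeo : ∑ i ∈ range (L+1), qq β^i ≤ qq β^(L+1)/(qq β - 1) := by
    rw [geom_sum_eq (ne_of_gt hq)]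
    gcongr
    · linarith
  have hqL : qq β^L = (2:ℝ)^(((2-β)/4)*(L:ℝ)) := by
    rw [qq, two_rpow_natCast_pow]
  have h2 : (2:ℝ)^(-(β/4)*(L:ℝ)) * (2:ℝ)^(((2-β)/4)*(L:ℝ)) = (2:ℝ)^(-(L:ℝ)*((β-1)/2)) := by
    rw [← Real.rpow_add two_pos]
    congr 1
    ring
  calc ∑ i ∈ range (L+1), stageR β i / Real.sqrt (kf β L i)
      ≤ ∑ i ∈ range (L+1),
          Real.sqrt (cw β * (2:ℝ)^(β-1)) * ((2:ℝ)^(-(β/4)*(L:ℝ)) * qq β^i) :=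
        Finset.sum_le_sum hterm
  _ = Real.sqrt (cw β * (2:ℝ)^(β-1)) * (2:ℝ)^(-(β/4)*(L:ℝ)) * ∑ i ∈ range (L+1), qq β^i := by
        rw [Finset.mul_sum]
        exact Finset.sum_congr rfl fun i _ => by ring
  _ ≤ Real.sqrt (cw β * (2:ℝ)^(β-1)) * (2:ℝ)^(-(β/4)*(L:ℝ)) * (qq β^(L+1)/(qq β - 1)) := by
        refine mul_le_mul_of_nonneg_left hgeo (by positivity)
  _ = Real.sqrt (cw β * (2:ℝ)^(β-1)) * (qq β/(qq β - 1))
        * ((2:ℝ)^(-(β/4)*(L:ℝ)) * qq β^L) := by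
        rw [pow_succ]
        ring
  _ = K1 β * (2:ℝ)^(-(L:ℝ)*((β-1)/2)) := by
        rw [K1, hqL, h2]

end Arith2
end EntropyAux

open EntropyAux Finset in
/-- Upper bound `e_n(V*) ≤ C₂ n^{-(β-1)/2}` for `1 < β < 2`: for every radius
`ε` exceeding the bound, the image of the unit ball of `ℓ₁(T)` under `V*` can be
covered by `2^{n-1}` balls of radius `ε` in `ℓ₂(T,W)`. -/
theorem entropy_upper_bound_regular_small_beta (β : ℝ) (hβ1 : 1 < β) (hβ2 : β < 2) :
    ∃ C : ℝ, 0 < C ∧ ∀ n : ℕ, 0 < n → ∀ ε : ℝ, C * (n : ℝ) ^ (-((β - 1) / 2)) < ε →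
      ∃ N : Finset (Node → ℝ), N.card ≤ 2 ^ (n - 1) ∧
        ∀ μ : Node → ℝ, MemL1 μ → l1Norm μ ≤ 1 →
          ∃ g ∈ N, distSqW β (Vstar μ) g ≤ ENNReal.ofReal (ε ^ 2) := by
  classical
  set D := Dn β with hD
  set C := (K1 β + Real.sqrt (cw β) + 1) * (16 * D) with hC
  have hK1 := K1_nonneg (β := β) hβ2
  have hcw := cw_pos (β := β) hβ1
  have hsq : Real.sqrt (cw β)^2 = cw β := Real.sq_sqrt hcw.le
  have hsnn : 0 ≤ Real.sqrt (cw β) := Real.sqrt_nonneg _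
  have hD1 : (1:ℝ) ≤ (D:ℝ) := by exact_mod_cast Dn_pos (β := β)
  have hCpos : 0 < C := by
    rw [hC]
    have h1 : (0:ℝ) < K1 β + Real.sqrt (cw β) + 1 := by linarith
    have h2 : (0:ℝ) < 16 * (D:ℝ) := by linarith
    exact mul_pos h1 h2
  refine ⟨C, hCpos, ?_⟩
  intro n hn ε hε
  have hnR : (0:ℝ) < n := by exact_mod_cast hn
  have hεpos : 0 < ε := lt_of_le_of_lt (by positivity) hε
  have hsqbound : C^2 * (n:ℝ)^(1-β) < ε^2 := by
    have h1 : (C * (n:ℝ)^(-((β-1)/2)))^2 = C^2 * (n:ℝ)^(1-β) := by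
      rw [mul_pow]
      congr 1
      rw [← Real.rpow_natCast ((n:ℝ)^(-((β-1)/2))) 2, ← Real.rpow_mul hnR.le]
      congr 1
      push_cast
      ring
    have h2 : 0 ≤ C * (n:ℝ)^(-((β-1)/2)) := by positivity
    nlinarith [hε]
  -- key constant comparison (used in both cases with A = 8D or 16D)
  have hconst : ∀ A : ℝ, (1:ℝ) ≤ A → A ≤ 16*D → (K1 β^2 + cw β) * A^(β-1) ≤ C^2 := by
    intro A hA1 hA2
    have hpow : A^(β-1) ≤ A := by
      calc A^(β-1) ≤ A^(1:ℝ) := Real.rpow_le_rpow_of_exponent_le hA1 (by linarith)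
      _ = A := Real.rpow_one A
    have hApos : (0:ℝ) < A := by linarith
    have hC2 : C^2 = (K1 β + Real.sqrt (cw β) + 1)^2 * (16*(D:ℝ))^2 := by
      rw [hC]; ring
    have h16D : (1:ℝ) ≤ 16*(D:ℝ) := by linarith
    have e1 : K1 β^2 + cw β ≤ (K1 β + Real.sqrt (cw β) + 1)^2 := by
      nlinarith [mul_nonneg hK1 hsnn]
    have e2 : A ≤ (16*(D:ℝ))^2 := by nlinarith
    calc (K1 β^2 + cw β) * A^(β-1) ≤ (K1 β^2 + cw β) * A := by
          have : 0 ≤ K1 β^2 + cw β := by positivity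
          nlinarith
    _ ≤ (K1 β + Real.sqrt (cw β) + 1)^2 * (16*(D:ℝ))^2 :=
          mul_le_mul e1 e2 (by linarith) (sq_nonneg _)
    _ = C^2 := hC2.symm
  by_cases hcase : n < 8 * D
  · -- small n : single-element cover {0}
    refine ⟨{fun _ : Node => (0:ℝ)}, ?_, ?_⟩
    · rw [Finset.card_singleton]
      exact Nat.one_le_two_pow
    · intro μ hμ h1
      refine ⟨fun _ => (0:ℝ), Finset.mem_singleton_self _, ?_⟩
      refine le_trans (total_le hβ1 hμ h1) (ENNReal.ofReal_le_ofReal ?_)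
      have hnle : (n:ℝ) ≤ 8*D := by exact_mod_cast le_of_lt hcase
      have h8D : (1:ℝ) ≤ 8*(D:ℝ) := by linarith
      have hmono : ((8:ℝ)*D)^(1-β) ≤ (n:ℝ)^(1-β) :=
        Real.rpow_le_rpow_of_nonpos hnR hnle (by linarith)
      have hcancel : ((8:ℝ)*D)^(β-1) * ((8:ℝ)*D)^(1-β) = 1 := by
        rw [← Real.rpow_add (by linarith), show β-1+(1-β) = 0 by ring, Real.rpow_zero]
      have hkey : cw β ≤ C^2 * ((8:ℝ)*D)^(1-β) := by
        have hC2 := hconst (8*D) h8D (by linarith)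
        have h2 : cw β * ((8:ℝ)*D)^(β-1) ≤ C^2 := by
          refine le_trans ?_ hC2
          have : (0:ℝ) ≤ ((8:ℝ)*D)^(β-1) := Real.rpow_nonneg (by linarith) _
          nlinarith [sq_nonneg (K1 β)]
        calc cw β = (cw β * ((8:ℝ)*D)^(β-1)) * ((8:ℝ)*D)^(1-β) := by
              rw [mul_assoc, hcancel, mul_one]
        _ ≤ C^2 * ((8:ℝ)*D)^(1-β) :=
              mul_le_mul_of_nonneg_right h2 (Real.rpow_nonneg (by linarith) _)
      have hfin : cw β ≤ C^2 * (n:ℝ)^(1-β) :=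
        hkey.trans (mul_le_mul_of_nonneg_left hmono (sq_nonneg C))
      have : tailW β 0 = cw β := rfl
      linarith
  · -- large n
    push_neg at hcase
    have hD1n : 1 ≤ D := Dn_pos
    set P := n / (4*D) with hP
    have hP1 : 1 ≤ P := by
      rw [hP]
      exact (Nat.one_le_div_iff (by omega)).2 (by omega)
    set L := Nat.log2 P with hL
    have h2L_le_P : 2^L ≤ P := by rw [hL]; exact Nat.log2_self_le (by omega)
    have hP_lt : P < 2^(L+1) := by rw [hL]; exact Nat.lt_log2_self
    obtain ⟨N, hNcard, hNcover⟩ := cover_L (β := β) hβ1 L (kf β L) (fun i => kf_ge_one β L i)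
    refine ⟨N, ?_, ?_⟩
    · refine hNcard.trans (Nat.pow_le_pow_right (by norm_num) ?_)
      have hS := budget (β := β) hβ1 hβ2 L
      have h1 : D * 2^L ≤ D * P := Nat.mul_le_mul_left _ h2L_le_P
      have h2 : D * P ≤ n / 4 := by
        rw [hP, show 4*D = 4*D from rfl]
        have e1 : n / (4*D) = n / 4 / D := by rw [Nat.div_div_eq_div_mul]
        rw [e1, Nat.mul_comm]
        exact Nat.div_mul_le_self (n/4) D
      have h3 : n / 4 ≤ n - 1 := by omega
      exact le_trans hS (le_trans h1 (le_trans h2 h3))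
    · intro μ hμ h1
      obtain ⟨g, hg, hdist⟩ := hNcover μ hμ h1
      refine ⟨g, hg, hdist.trans (ENNReal.ofReal_le_ofReal ?_)⟩
      have herr := err_le (β := β) hβ1 hβ2 L
      have htail := tail2_le (β := β) hβ1 L
      have h16Dpos : (0:ℝ) < 16*(D:ℝ) := by linarith
      -- (n : ℝ)/(16 D) ≤ 2^L
      have hndiv : (n:ℝ) < 4*(D:ℝ)*((P:ℝ)+1) := by
        have hmod := Nat.div_add_mod n (4*D)
        rw [← hP] at hmod
        have hmlt : n % (4*D) < 4*D := Nat.mod_lt n (by omega)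
        have hgoal : 4*D*(P+1) = 4*D*P + 4*D := by ring
        have hnat : n < 4*D*(P+1) := by rw [hgoal]; omega
        exact_mod_cast hnat
      have hPreal : (P:ℝ) + 1 ≤ 2*(2:ℝ)^L := by
        have : (P:ℝ) + 1 ≤ ((2^(L+1) : ℕ) : ℝ) := by exact_mod_cast hP_lt
        rw [pow_succ] at this
        push_cast at this
        linarith
      have h2Lb : (n:ℝ)/(16*D) ≤ (2:ℝ)^L := by
        rw [div_le_iff₀ h16Dpos]
        have h2Lpos : (0:ℝ) < (2:ℝ)^L := by positivity
        nlinarith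
      have hx16 : (0:ℝ) < (n:ℝ)/(16*D) := by positivity
      -- bounds in terms of n/(16D)
      have herr2 : ∑ i ∈ range (L+1), stageR β i / Real.sqrt (kf β L i)
          ≤ K1 β * ((n:ℝ)/(16*D))^(-((β-1)/2)) := by
        refine herr.trans ?_
        have he1 : (2:ℝ)^(-(L:ℝ)*((β-1)/2)) = ((2:ℝ)^L)^(-((β-1)/2)) := by
          rw [rpow_natpow_base]
          congr 1
          ring
        rw [he1]
        refine mul_le_mul_of_nonneg_left ?_ hK1
        exact Real.rpow_le_rpow_of_nonpos hx16 h2Lb (by linarith)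
      have htail2 : tailW β (2^L + 1) ≤ cw β * ((n:ℝ)/(16*D))^(1-β) := by
        refine htail.trans ?_
        have he1 : (2:ℝ)^((L:ℝ)*(1-β)) = ((2:ℝ)^L)^(1-β) := by rw [rpow_natpow_base]
        rw [he1]
        refine mul_le_mul_of_nonneg_left ?_ hcw.le
        exact Real.rpow_le_rpow_of_nonpos hx16 h2Lb (by linarith)
      -- squares
      have herrnn : 0 ≤ ∑ i ∈ range (L+1), stageR β i / Real.sqrt (kf β L i) :=
        Finset.sum_nonneg fun i _ => div_nonneg (stageR_nonneg β i) (Real.sqrt_nonneg _)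
      have hsq2 : (((n:ℝ)/(16*D))^(-((β-1)/2)))^2 = ((n:ℝ)/(16*D))^(1-β) := by
        rw [← Real.rpow_natCast (((n:ℝ)/(16*D))^(-((β-1)/2))) 2, ← Real.rpow_mul hx16.le]
        congr 1
        push_cast
        ring
      have herrsq : (∑ i ∈ range (L+1), stageR β i / Real.sqrt (kf β L i))^2
          ≤ K1 β^2 * ((n:ℝ)/(16*D))^(1-β) := by
        have h0 : 0 ≤ K1 β * ((n:ℝ)/(16*D))^(-((β-1)/2)) := by positivity
        calc (∑ i ∈ range (L+1), stageR β i / Real.sqrt (kf β L i))^2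
            ≤ (K1 β * ((n:ℝ)/(16*D))^(-((β-1)/2)))^2 := by nlinarith
        _ = K1 β^2 * ((n:ℝ)/(16*D))^(1-β) := by rw [mul_pow, hsq2]
      -- combine
      have hsum : (∑ i ∈ range (L+1), stageR β i / Real.sqrt (kf β L i))^2 + tailW β (2^L + 1)
          ≤ (K1 β^2 + cw β) * ((n:ℝ)/(16*D))^(1-β) := by
        have := htail2
        nlinarith [herrsq]
      have hsplitpow : ((n:ℝ)/(16*D))^(1-β) = (n:ℝ)^(1-β) * ((16:ℝ)*D)^(β-1) := by
        rw [Real.div_rpow hnR.le h16Dpos.le]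
        rw [div_eq_mul_inv, ← Real.rpow_neg h16Dpos.le]
        congr 1
        ring
      have hfinal : (K1 β^2 + cw β) * ((n:ℝ)/(16*D))^(1-β) ≤ C^2 * (n:ℝ)^(1-β) := by
        rw [hsplitpow]
        have hc := hconst (16*D) (by linarith) (le_refl _)
        have hnp : (0:ℝ) ≤ (n:ℝ)^(1-β) := Real.rpow_nonneg hnR.le _
        nlinarith
      linarith [hsqbound]
end

section
/- Let T be the infinite binary tree with weight w(t) = (1+|t|)^{-β} where β > 1, and let V* : ℓ₁(T) → ℓ₂(T,W) be the operator (V*μ)(t) = Σ_{u ⪰ t} μ(u). Then there exists a constant C₁ = C₁(β) > 0 such that for all positive integers n, e_{n+1}(V*) ≥ (C₁/2) · n^{-(β-1)/2}. (This lower bound is proved by exhibiting 2ⁿ elements μ_j = δ_{s_j} − δ_{t_j}, with t_j the nodes of level n and s_j an offspring of t_j at level 2n, whose images under V* are pairwise orthogonal with ‖V*μ_j‖²_{2,W} = Σ_{l=n+1}^{2n} (1+l)^{-β} ≥ C₁² n^{-(β-1)}.) -/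
open scoped ENNReal

open Classical in
noncomputable def muCand (n : ℕ) (b : Fin n → Bool) : Node → ℝ :=
  fun u => if u = List.ofFn b ++ List.replicate n false then (1:ℝ)/2
           else if u = List.ofFn b then -(1/2) else 0

open Classical in
noncomputable def fCand (n : ℕ) (b : Fin n → Bool) : Node → ℝ :=
  fun u => (if u <+: (List.ofFn b ++ List.replicate n false) then (1:ℝ)/2 else 0)
         - (if u <+: List.ofFn b then (1:ℝ)/2 else 0)

lemma ts_ne (n : ℕ) (hn : 0 < n) (b : Fin n → Bool) :
    List.ofFn b ≠ List.ofFn b ++ List.replicate n false := by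
  intro h
  apply_fun List.length at h
  simp at h
  omega

lemma memL1_muCand (n : ℕ) (b : Fin n → Bool) : MemL1 (muCand n b) := by
  classical
  apply summable_of_ne_finset_zero
    (s := {List.ofFn b ++ List.replicate n false, List.ofFn b})
  intro u hu
  simp only [Finset.mem_insert, Finset.mem_singleton] at hu
  push_neg at hu
  simp [muCand, hu.1, hu.2]

lemma l1Norm_muCand (n : ℕ) (hn : 0 < n) (b : Fin n → Bool) : l1Norm (muCand n b) ≤ 1 := by
  classical
  rw [l1Norm, tsum_eq_sum (s := {List.ofFn b ++ List.replicate n false, List.ofFn b})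
    (by intro u hu
        simp only [Finset.mem_insert, Finset.mem_singleton] at hu
        push_neg at hu
        simp [muCand, hu.1, hu.2])]
  rw [Finset.sum_pair (Ne.symm (ts_ne n hn b))]
  rw [show muCand n b (List.ofFn b ++ List.replicate n false) = 1/2 by simp [muCand]]
  rw [show muCand n b (List.ofFn b) = -(1/2) by simp [muCand, ts_ne n hn b]]
  rw [abs_neg, abs_of_pos (by norm_num : (0:ℝ) < 1/2)]
  norm_num

lemma Vstar_muCand (n : ℕ) (hn : 0 < n) (b : Fin n → Bool) :
    Vstar (muCand n b) = fCand n b := by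
  classical
  funext u
  have h1 : Vstar (muCand n b) u
      = ∑' v : Node, Set.indicator {v | u <+: v} (muCand n b) v := by
    rw [Vstar]; exact (tsum_subtype {v | u <+: v} (muCand n b))
  rw [h1, tsum_eq_sum (s := {List.ofFn b ++ List.replicate n false, List.ofFn b})
    (by intro v hv
        simp only [Finset.mem_insert, Finset.mem_singleton] at hv
        push_neg at hv
        simp [Set.indicator_apply, muCand, hv.1, hv.2]),
    Finset.sum_pair (Ne.symm (ts_ne n hn b))]
  simp only [Set.indicator_apply, Set.mem_setOf_eq]
  rw [show muCand n b (List.ofFn b ++ List.replicate n false) = 1/2 by simp [muCand]]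
  rw [show muCand n b (List.ofFn b) = -(1/2) by simp [muCand, ts_ne n hn b]]
  simp only [fCand]
  split_ifs <;> ring

lemma wgt_nonneg (β : ℝ) (t : Node) : 0 ≤ wgt β t :=
  Real.rpow_nonneg (by positivity) _

lemma Vstar_zero : Vstar (fun _ => (0:ℝ)) = fun _ => (0:ℝ) := by
  funext u; simp [Vstar]

lemma distSqW_comm (β : ℝ) (f g : Node → ℝ) : distSqW β f g = distSqW β g f := by
  unfold distSqW
  apply tsum_congr
  intro t
  rw [show (f t - g t)^2 = (g t - f t)^2 by ring]

lemma distSqW_triangle (β : ℝ) (f h g : Node → ℝ) :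
    distSqW β f h ≤ 2 * distSqW β f g + 2 * distSqW β g h := by
  unfold distSqW
  rw [← ENNReal.tsum_mul_left, ← ENNReal.tsum_mul_left, ← ENNReal.tsum_add]
  apply ENNReal.tsum_le_tsum
  intro t
  have hw := wgt_nonneg β t
  have h2 : (2:ℝ≥0∞) = ENNReal.ofReal 2 := by norm_num
  rw [h2, ← ENNReal.ofReal_mul (by norm_num), ← ENNReal.ofReal_mul (by norm_num),
    ← ENNReal.ofReal_add (by positivity) (by positivity)]
  apply ENNReal.ofReal_le_ofReal
  nlinarith [sq_nonneg (f t - 2 * g t + h t), sq_nonneg (f t - h t)]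

lemma fCand_at_take (n : ℕ) (b : Fin n → Bool) (l : ℕ) (h1 : n < l) (h2 : l ≤ 2*n) :
    fCand n b ((List.ofFn b ++ List.replicate n false).take l) = 1/2 := by
  classical
  set s := List.ofFn b ++ List.replicate n false with hs
  have hlen : (s.take l).length = l := by
    simp [hs]; omega
  rw [fCand]
  rw [if_pos (List.take_prefix l s)]
  rw [if_neg]
  · ring
  · intro hpre
    have := hpre.length_le
    simp [hlen] at this
    omega

lemma fCand_vanish (n : ℕ) (b b' : Fin n → Bool) (hbb : b ≠ b')
    (l : ℕ) (h1 : n < l) (h2 : l ≤ 2*n) :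
    fCand n b' ((List.ofFn b ++ List.replicate n false).take l) = 0 := by
  classical
  set s := List.ofFn b ++ List.replicate n false with hs
  set u := s.take l with hu
  have hlen : u.length = l := by simp [hu, hs]; omega
  have husp : u <+: s := List.take_prefix l s
  rw [fCand]
  rw [if_neg, if_neg]
  · ring
  · -- ¬ u <+: List.ofFn b'
    intro hpre
    have := hpre.length_le
    simp [hlen] at this
    omega
  · -- ¬ u <+: List.ofFn b' ++ List.replicate n false
    intro hpre
    have htb'u : List.ofFn b' <+: u :=
      List.prefix_of_prefix_length_le (List.prefix_append _ _) hpre (by simp [hlen]; omega)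
    have htbu : List.ofFn b <+: u :=
      List.prefix_of_prefix_length_le (List.prefix_append _ _) husp (by simp [hlen]; omega)
    have : List.ofFn b = List.ofFn b' :=
      (List.prefix_of_prefix_length_le htbu htb'u (by simp)).eq_of_length (by simp)
    exact hbb (List.ofFn_inj.mp this)

lemma key_lb (β : ℝ) (hβ0 : 0 ≤ β) (n : ℕ) (hn : 0 < n) (b : Fin n → Bool) (g : Node → ℝ)
    (hg : ∀ l, n < l → l ≤ 2*n → g ((List.ofFn b ++ List.replicate n false).take l) = 0) :
    ENNReal.ofReal ((n : ℝ) * ((3*(n:ℝ)) ^ (-β) * (1/4))) ≤ distSqW β (fCand n b) g := by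
  classical
  set s := List.ofFn b ++ List.replicate n false with hs
  have hslen : s.length = 2*n := by simp [hs]; omega
  set P : Finset Node := (Finset.Icc (n+1) (2*n)).image (fun l => s.take l) with hP
  have hsum : ∑ u ∈ P, ENNReal.ofReal (wgt β u * (fCand n b u - g u)^2)
      ≤ distSqW β (fCand n b) g := ENNReal.sum_le_tsum P
  refine le_trans ?_ hsum
  rw [hP, Finset.sum_image (by
    intro l hl l' hl' h
    have := congrArg List.length h
    simpa [List.length_take, hslen, Finset.mem_Icc.mp hl, Finset.mem_Icc.mp hl',
      Nat.min_eq_left, min_eq_left (Finset.mem_Icc.mp hl).2,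
      min_eq_left (Finset.mem_Icc.mp hl').2] using this)]
  have hterm : ∀ l ∈ Finset.Icc (n+1) (2*n),
      ENNReal.ofReal ((3*(n:ℝ)) ^ (-β) * (1/4))
        ≤ ENNReal.ofReal (wgt β (s.take l) * (fCand n b (s.take l) - g (s.take l))^2) := by
    intro l hl
    obtain ⟨hl1, hl2⟩ := Finset.mem_Icc.mp hl
    rw [fCand_at_take n b l (by omega) hl2, hg l (by omega) hl2]
    apply ENNReal.ofReal_le_ofReal
    have hlen : (s.take l).length = l := by simp [hs]; omega
    have hwge : (3*(n:ℝ)) ^ (-β) ≤ wgt β (s.take l) := by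
      rw [wgt, hlen]
      rw [Real.rpow_neg (by positivity), Real.rpow_neg (by positivity)]
      apply inv_anti₀
      · apply Real.rpow_pos_of_pos; positivity
      · apply Real.rpow_le_rpow (by positivity) _ hβ0
        have hn1 : (1:ℝ) ≤ n := by exact_mod_cast hn
        have hl2' : (l:ℝ) ≤ 2*n := by exact_mod_cast hl2
        linarith
    have h14 : ((1:ℝ)/2 - 0)^2 = 1/4 := by norm_num
    rw [h14]
    exact mul_le_mul_of_nonneg_right hwge (by norm_num)
  calc ENNReal.ofReal ((n : ℝ) * ((3*(n:ℝ)) ^ (-β) * (1/4)))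
      = (Finset.Icc (n+1) (2*n)).card • ENNReal.ofReal ((3*(n:ℝ)) ^ (-β) * (1/4)) := by
        rw [Nat.card_Icc]
        have hcard : 2*n + 1 - (n+1) = n := by omega
        rw [hcard, nsmul_eq_mul, ← ENNReal.ofReal_natCast n, ← ENNReal.ofReal_mul (by positivity)]
    _ = ∑ _l ∈ Finset.Icc (n+1) (2*n), ENNReal.ofReal ((3*(n:ℝ)) ^ (-β) * (1/4)) := by
        rw [Finset.sum_const]
    _ ≤ _ := Finset.sum_le_sum hterm

lemma memL1_zero : MemL1 (fun _ : Node => (0:ℝ)) := by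
  simp [MemL1]

lemma l1Norm_zero : l1Norm (fun _ : Node => (0:ℝ)) ≤ 1 := by
  simp [l1Norm]

/-- Lower bound `e_{n+1}(V*) ≥ (C₁/2) n^{-(β-1)/2}` for `β > 1`: there is `C₁ > 0`
such that for every positive `n`, no family of `2^{(n+1)-1} = 2^n` balls of radius
smaller than `(C₁/2) n^{-(β-1)/2}` can cover the image of the unit ball of `ℓ₁(T)`
under `V*`; equivalently, for every set of `2^n` prospective centers in `ℓ₂(T,W)`
there is a point of the image at distance at least `(C₁/2) n^{-(β-1)/2}`
from all of them. -/
theorem entropy_lower_bound_regular (β : ℝ) (hβ : 1 < β) :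
    ∃ C : ℝ, 0 < C ∧ ∀ n : ℕ, 0 < n →
      ∀ N : Finset (Node → ℝ), N.card ≤ 2 ^ n →
        ∃ μ : Node → ℝ, MemL1 μ ∧ l1Norm μ ≤ 1 ∧
          ∀ g ∈ N,
            ENNReal.ofReal ((C / 2 * (n : ℝ) ^ (-((β - 1) / 2))) ^ 2) ≤
              distSqW β (Vstar μ) g := by
  classical
  have ha0 : (0:ℝ) ≤ (3:ℝ) ^ (-β) := Real.rpow_nonneg (by norm_num) _
  have ha0' : (0:ℝ) < (3:ℝ) ^ (-β) := Real.rpow_pos_of_pos (by norm_num) _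
  refine ⟨Real.sqrt ((3:ℝ) ^ (-β)) / 2,
    div_pos (Real.sqrt_pos.mpr ha0') (by norm_num), ?_⟩
  intro n hn N hN
  by_contra hcon
  push_neg at hcon
  set R := ENNReal.ofReal ((Real.sqrt ((3:ℝ) ^ (-β)) / 2 / 2 * (n : ℝ) ^ (-((β - 1) / 2))) ^ 2)
    with hR
  have hch : ∀ i : Option (Fin n → Bool), ∃ g ∈ N,
      distSqW β (Vstar (i.elim (fun _ => 0) (fun b => muCand n b))) g < R := by
    intro i
    cases i with
    | none => exact hcon _ memL1_zero l1Norm_zero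
    | some b => exact hcon _ (memL1_muCand n b) (l1Norm_muCand n hn b)
  choose gm hgmN hgm using hch
  have hcard : N.card < (Finset.univ : Finset (Option (Fin n → Bool))).card := by
    rw [Finset.card_univ, Fintype.card_option]
    have : Fintype.card (Fin n → Bool) = 2 ^ n := by simp
    omega
  obtain ⟨i, -, j, -, hij, hgij⟩ :=
    Finset.exists_ne_map_eq_of_card_lt_of_maps_to hcard (fun i _ => hgmN i)
  have hdi := hgm i
  have hdj := hgm j
  rw [hgij] at hdi
  have main : ∃ (b : Fin n → Bool) (g2 : Node → ℝ),
      (∀ l, n < l → l ≤ 2*n → g2 ((List.ofFn b ++ List.replicate n false).take l) = 0) ∧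
      distSqW β (fCand n b) (gm j) < R ∧ distSqW β g2 (gm j) < R := by
    match i, j, hij with
    | none, none, hij => exact absurd rfl hij
    | some b, none, hij =>
        refine ⟨b, fun _ => 0, fun _ _ _ => rfl, ?_, ?_⟩
        · rw [← Vstar_muCand n hn b]; exact hdi
        · rw [show (fun _ : Node => (0:ℝ)) = Vstar (fun _ => 0) from (Vstar_zero).symm]
          exact hdj
    | none, some b, hij =>
        refine ⟨b, fun _ => 0, fun _ _ _ => rfl, ?_, ?_⟩
        · rw [← Vstar_muCand n hn b]; exact hdj
        · rw [show (fun _ : Node => (0:ℝ)) = Vstar (fun _ => 0) from (Vstar_zero).symm]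
          exact hdi
    | some b, some b', hij =>
        have hbb : b ≠ b' := fun h => hij (by rw [h])
        refine ⟨b, fCand n b', fCand_vanish n b b' hbb, ?_, ?_⟩
        · rw [← Vstar_muCand n hn b]; exact hdi
        · rw [← Vstar_muCand n hn b']; exact hdj
  obtain ⟨b, g2, hvan, hd1, hd2⟩ := main
  have hlow := key_lb β (by linarith) n hn b g2 hvan
  have htri := distSqW_triangle β (fCand n b) g2 (gm j)
  rw [distSqW_comm β (gm j) g2] at htri
  have hRtop : R ≠ ⊤ := ENNReal.ofReal_ne_top
  have hbig : ENNReal.ofReal ((n : ℝ) * ((3*(n:ℝ)) ^ (-β) * (1/4))) < 4 * R := by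
    calc ENNReal.ofReal ((n : ℝ) * ((3*(n:ℝ)) ^ (-β) * (1/4)))
        ≤ distSqW β (fCand n b) g2 := hlow
      _ ≤ 2 * distSqW β (fCand n b) (gm j) + 2 * distSqW β g2 (gm j) := htri
      _ < 2 * R + 2 * R := by
          exact ENNReal.add_lt_add
            (ENNReal.mul_lt_mul_right (by norm_num) (by norm_num) hd1)
            (ENNReal.mul_lt_mul_right (by norm_num) (by norm_num) hd2)
      _ = 4 * R := by ring
  rw [hR, show (4:ℝ≥0∞) = ENNReal.ofReal 4 by norm_num,
    ← ENNReal.ofReal_mul (by norm_num)] at hbig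
  have hreal := (ENNReal.ofReal_lt_ofReal_iff_of_nonneg (by positivity)).mp hbig
  -- now a real contradiction
  have hn' : (0:ℝ) < n := by exact_mod_cast hn
  have hC2 : (Real.sqrt ((3:ℝ) ^ (-β)))^2 = (3:ℝ)^(-β) := Real.sq_sqrt ha0
  have hX : ((n:ℝ) ^ (-((β-1)/2)))^2 = (n:ℝ)^(1-β) := by
    rw [← Real.rpow_natCast ((n:ℝ) ^ (-((β-1)/2))) 2, ← Real.rpow_mul hn'.le]
    congr 1
    push_cast
    ring
  have hsplit : (n:ℝ) * (n:ℝ)^(-β) = (n:ℝ)^(1-β) := by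
    nth_rewrite 1 [← Real.rpow_one (n:ℝ)]
    rw [← Real.rpow_add hn']
    congr 1
  have h1 : 4 * ((Real.sqrt ((3:ℝ) ^ (-β)) / 2 / 2) * ((n:ℝ) ^ (-((β-1)/2))))^2
      = (3:ℝ)^(-β) * ((n:ℝ)^(1-β)) / 4 := by
    rw [mul_pow, show ((Real.sqrt ((3:ℝ)^(-β)) / 2 / 2))^2
        = (Real.sqrt ((3:ℝ)^(-β)))^2 / 16 by ring, hC2, hX]
    ring
  have h2 : (n:ℝ) * ((3*(n:ℝ))^(-β) * (1/4)) = (3:ℝ)^(-β) * ((n:ℝ)^(1-β)) / 4 := by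
    rw [Real.mul_rpow (by norm_num) hn'.le, ← hsplit]
    ring
  rw [h2, h1] at hreal
  exact lt_irrefl _ hreal
end

section
/- Let T be the infinite binary tree with the critical weight w(t) = (1+|t|)^{-2}, and let V* : ℓ₁(T) → ℓ₂(T,W) be the operator (V*μ)(t) = Σ_{u ⪰ t} μ(u). Then there exists a numerical constant C such that for all positive integers n, e_n(V*) ≤ C · n^{-1/2}. -/
open scoped ENNReal

namespace EP

noncomputable def fE (ν : Node → ℝ) (t : Node) : ℝ≥0∞ :=
  ∑' u : {u : Node // t <+: u}, ENNReal.ofReal (ν u.1)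

variable {ν : Node → ℝ}

lemma fE_eq (hν : ∀ t, 0 ≤ ν t) (hs : Summable ν) (t : Node) :
    fE ν t = ENNReal.ofReal (Vstar ν t) := by
  rw [Vstar]
  exact (ENNReal.ofReal_tsum_of_nonneg (fun u : {u : Node // t <+: u} => hν u.1)
    (hs.subtype _)).symm

lemma vstar_nonneg (hν : ∀ t, 0 ≤ ν t) (t : Node) : 0 ≤ Vstar ν t :=
  tsum_nonneg fun u => hν u.1

lemma fE_le_mass (t : Node) : fE ν t ≤ ∑' u : Node, ENNReal.ofReal (ν u) :=
  ENNReal.tsum_comp_le_tsum_of_injective Subtype.coe_injective _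

lemma fE_mono {t u : Node} (h : t <+: u) : fE ν u ≤ fE ν t := by
  have hinj : Function.Injective (fun w : {w : Node // u <+: w} =>
      (⟨w.1, h.trans w.2⟩ : {w : Node // t <+: w})) := by
    rintro ⟨a, ha⟩ ⟨b, hb⟩ hab
    exact Subtype.ext (by simpa using congrArg Subtype.val hab)
  exact ENNReal.tsum_comp_le_tsum_of_injective hinj
    (fun x : {w : Node // t <+: w} => ENNReal.ofReal (ν x.1))

lemma prefix_eq_of_length {a b u : Node} (ha : a <+: u) (hb : b <+: u)
    (h : a.length = b.length) : a = b := by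
  rw [List.prefix_iff_eq_take.1 ha, List.prefix_iff_eq_take.1 hb, h]

lemma level_le (r : Node) (j : ℕ) :
    ∑' v : {v : Node // v.length = j}, fE ν (r ++ v.1) ≤ fE ν r := by
  classical
  have hinj : Function.Injective
      (fun p : (Σ v : {v : Node // v.length = j}, {u : Node // (r ++ v.1) <+: u}) =>
        (⟨p.2.1, ((r.prefix_append p.1.1).trans p.2.2 : r <+: p.2.1)⟩ :
          {u : Node // r <+: u})) := by
    rintro ⟨⟨v, hv⟩, ⟨u, hu⟩⟩ ⟨⟨v', hv'⟩, ⟨u', hu'⟩⟩ h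
    have huu : u = u' := by simpa using congrArg Subtype.val h
    subst huu
    have hvv : v = v' := by
      have h1 : r ++ v = r ++ v' := prefix_eq_of_length hu hu' (by simp [hv, hv'])
      exact List.append_cancel_left h1
    subst hvv
    rfl
  calc ∑' v : {v : Node // v.length = j}, fE ν (r ++ v.1)
      = ∑' (v : {v : Node // v.length = j}) (u : {u : Node // (r ++ v.1) <+: u}),
        ENNReal.ofReal (ν u.1) := rfl
    _ = ∑' p : (Σ v : {v : Node // v.length = j}, {u : Node // (r ++ v.1) <+: u}),
        ENNReal.ofReal (ν p.2.1) :=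
        (ENNReal.tsum_sigma' (fun p : (Σ v : {v : Node // v.length = j},
          {u : Node // (r ++ v.1) <+: u}) => ENNReal.ofReal (ν p.2.1))).symm
    _ ≤ fE ν r := ENNReal.tsum_comp_le_tsum_of_injective hinj
        (fun x : {u : Node // r <+: u} => ENNReal.ofReal (ν x.1))

lemma prefix_total {a b c : Node} (h1 : a <+: c) (h2 : b <+: c) : a <+: b ∨ b <+: a := by
  rcases le_total a.length b.length with h | h
  · left
    have : a = List.take a.length b := by
      rw [List.prefix_iff_eq_take.1 h2, List.take_take, min_eq_left h,
        ← List.prefix_iff_eq_take.1 h1]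
    rw [this]
    exact List.take_prefix _ _
  · right
    have : b = List.take b.length a := by
      rw [List.prefix_iff_eq_take.1 h1, List.take_take, min_eq_left h,
        ← List.prefix_iff_eq_take.1 h2]
    rw [this]
    exact List.take_prefix _ _

lemma children_le (t : Node) : fE ν (t ++ [false]) + fE ν (t ++ [true]) ≤ fE ν t := by
  classical
  have hinj : Function.Injective
      (fun p : (Σ b : Bool, {u : Node // (t ++ [b]) <+: u}) =>
        (⟨p.2.1, ((t.prefix_append [p.1]).trans p.2.2 : t <+: p.2.1)⟩ :
          {u : Node // t <+: u})) := by
    rintro ⟨b, ⟨u, hu⟩⟩ ⟨b', ⟨u', hu'⟩⟩ h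
    have huu : u = u' := by simpa using congrArg Subtype.val h
    subst huu
    have hbb : b = b' := by
      have h1 : t ++ [b] = t ++ [b'] := prefix_eq_of_length hu hu' (by simp)
      simpa using List.append_cancel_left h1
    subst hbb
    rfl
  have key : ∑' p : (Σ b : Bool, {u : Node // (t ++ [b]) <+: u}),
      ENNReal.ofReal (ν p.2.1) ≤ fE ν t :=
    ENNReal.tsum_comp_le_tsum_of_injective hinj
      (fun x : {u : Node // t <+: u} => ENNReal.ofReal (ν x.1))
  have e : ∑' p : (Σ b : Bool, {u : Node // (t ++ [b]) <+: u}), ENNReal.ofReal (ν p.2.1)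
      = ∑' b : Bool, fE ν (t ++ [b]) :=
    ENNReal.tsum_sigma' (fun p : (Σ b : Bool, {u : Node // (t ++ [b]) <+: u}) =>
      ENNReal.ofReal (ν p.2.1))
  rw [e, tsum_bool] at key
  exact key
 
lemma antichain_le (P : Set Node) (hP : ∀ r ∈ P, ∀ r' ∈ P, r <+: r' → r = r') :
    ∑' r : P, fE ν r.1 ≤ ∑' u : Node, ENNReal.ofReal (ν u) := by
  classical
  have hinj : Function.Injective
      (fun p : (Σ r : P, {u : Node // r.1 <+: u}) => (p.2.1 : Node)) := by
    rintro ⟨⟨r, hr⟩, ⟨u, hu⟩⟩ ⟨⟨r', hr'⟩, ⟨u', hu'⟩⟩ h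
    simp only at h
    subst h
    have hrr : r = r' := by
      rcases prefix_total hu hu' with h' | h'
      · exact hP r hr r' hr' h'
      · exact (hP r' hr' r hr h').symm
    subst hrr
    rfl
  have key : ∑' p : (Σ r : P, {u : Node // r.1 <+: u}), ENNReal.ofReal (ν p.2.1)
      ≤ ∑' u : Node, ENNReal.ofReal (ν u) :=
    ENNReal.tsum_comp_le_tsum_of_injective hinj (fun x : Node => ENNReal.ofReal (ν x))
  rw [ENNReal.tsum_sigma' (fun p : (Σ r : P, {u : Node // r.1 <+: u}) =>
    ENNReal.ofReal (ν p.2.1))] at key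
  exact key
noncomputable def realW (k : ℕ) : ℝ := ((1 : ℝ) + (k : ℝ)) ^ (-(2 : ℝ))

lemma wgt2_eq (t : Node) : wgt 2 t = realW t.length := rfl

lemma realW_eq (k : ℕ) : realW k = (((1 : ℝ) + k) ^ (2 : ℕ))⁻¹ := by
  rw [realW, Real.rpow_neg (by positivity : (0:ℝ) ≤ 1 + (k:ℝ))]
  congr 1
  rw [show ((2:ℝ)) = ((2:ℕ):ℝ) by norm_num, Real.rpow_natCast]

lemma realW_nonneg (k : ℕ) : 0 ≤ realW k := by
  rw [realW_eq]; positivity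

lemma realW_le (k : ℕ) : realW k ≤ 2 * ((1 + (k:ℝ))⁻¹ - (2 + (k:ℝ))⁻¹) := by
  have h1 : (0:ℝ) < 1 + k := by positivity
  have h2 : (0:ℝ) < 2 + k := by positivity
  have e : 2 * ((1 + (k:ℝ))⁻¹ - (2 + (k:ℝ))⁻¹) = 2 / ((1 + (k:ℝ)) * (2 + k)) := by
    field_simp
    ring
  rw [realW_eq, e, inv_eq_one_div, div_le_div_iff₀ (by positivity) (by positivity)]
  nlinarith
 
lemma tail_weight (R : ℕ) :
    ∑' j : ℕ, ENNReal.ofReal (realW (R + j)) ≤ ENNReal.ofReal (2 / (1 + (R:ℝ))) := by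
  apply ENNReal.tsum_le_of_sum_range_le
  intro K
  rw [← ENNReal.ofReal_sum_of_nonneg (fun i _ => realW_nonneg _)]
  apply ENNReal.ofReal_le_ofReal
  have hle : ∀ j ∈ Finset.range K, realW (R + j) ≤
      (fun j : ℕ => 2 * (1 + ((R:ℝ) + j))⁻¹) j - (fun j : ℕ => 2 * (1 + ((R:ℝ) + j))⁻¹) (j + 1) := by
    intro j _
    have := realW_le (R + j)
    have e1 : ((R + j : ℕ) : ℝ) = (R:ℝ) + j := by push_cast; ring
    rw [e1] at this
    calc realW (R + j) ≤ 2 * ((1 + ((R:ℝ) + j))⁻¹ - (2 + ((R:ℝ) + j))⁻¹) := this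
      _ = (fun j : ℕ => 2 * (1 + ((R:ℝ) + j))⁻¹) j -
          (fun j : ℕ => 2 * (1 + ((R:ℝ) + j))⁻¹) (j + 1) := by
          simp only []
          push_cast
          ring
  calc ∑ j ∈ Finset.range K, realW (R + j)
      ≤ ∑ j ∈ Finset.range K,
        ((fun j : ℕ => 2 * (1 + ((R:ℝ) + j))⁻¹) j - (fun j : ℕ => 2 * (1 + ((R:ℝ) + j))⁻¹) (j + 1)) :=
        Finset.sum_le_sum hle
    _ = 2 * (1 + ((R:ℝ) + (0:ℕ)))⁻¹ - 2 * (1 + ((R:ℝ) + (K:ℕ)))⁻¹ :=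
        Finset.sum_range_sub' (fun j : ℕ => 2 * (1 + ((R:ℝ) + j))⁻¹) K
    _ ≤ 2 * (1 + (R:ℝ))⁻¹ := by
        have h0 : (0:ℝ) ≤ 2 * (1 + ((R:ℝ) + (K:ℕ)))⁻¹ := by positivity
        push_cast at h0 ⊢
        simp only [add_zero]
        linarith
    _ = 2 / (1 + (R:ℝ)) := by rw [mul_comm, inv_mul_eq_div]

/-- The prefix-subtree equiv. -/
def subtreeEquiv (r : Node) : Node ≃ {t : Node // r <+: t} where
  toFun v := ⟨r ++ v, r.prefix_append v⟩
  invFun t := t.1.drop r.length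
  left_inv v := by simp
  right_inv t := by
    rcases t with ⟨t, w, rfl⟩
    simp

lemma subtree_weighted (hν : ∀ t, 0 ≤ ν t) (hs : Summable ν) (r : Node) (a : ℝ) (ha : 0 ≤ a)
    (g : Node → ℝ) (hg : ∀ t : Node, r <+: t → 0 ≤ g t ∧ g t ≤ a * Vstar ν t) :
    ∑' t : {t : Node // r <+: t}, ENNReal.ofReal (wgt 2 t.1 * g t.1)
      ≤ ENNReal.ofReal (2 / (1 + (r.length:ℝ))) * (ENNReal.ofReal a * fE ν r) := by
  classical
  set R := r.length with hR
  -- reindex to Node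
  have e1 := (subtreeEquiv r).tsum_eq (fun t : {t : Node // r <+: t} =>
    ENNReal.ofReal (wgt 2 t.1 * g t.1))
  rw [← e1]
  rw [show (∑' (c : Node), ENNReal.ofReal (wgt 2 ((subtreeEquiv r) c).1 * g ((subtreeEquiv r) c).1))
      = ∑' v : Node, ENNReal.ofReal (wgt 2 (r ++ v) * g (r ++ v)) from tsum_congr (fun v => rfl)]
  -- now sum over v : Node of ofReal (wgt 2 (r ++ v) * g (r ++ v))
  have e2 := (Equiv.sigmaFiberEquiv (List.length : Node → ℕ)).tsum_eq
    (fun v : Node => ENNReal.ofReal (wgt 2 (r ++ v) * g (r ++ v)))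
  rw [show (∑' v : Node, ENNReal.ofReal (wgt 2 (r ++ v) * g (r ++ v)))
      = ∑' p : (Σ j : ℕ, {v : Node // v.length = j}),
        ENNReal.ofReal (wgt 2 (r ++ p.2.1) * g (r ++ p.2.1)) from e2.symm]
  rw [ENNReal.tsum_sigma' (fun p : (Σ j : ℕ, {v : Node // v.length = j}) =>
    ENNReal.ofReal (wgt 2 (r ++ p.2.1) * g (r ++ p.2.1)))]
  -- bound each level
  have hlevel : ∀ j : ℕ, ∑' v : {v : Node // v.length = j},
      ENNReal.ofReal (wgt 2 (r ++ v.1) * g (r ++ v.1))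
      ≤ ENNReal.ofReal (realW (R + j)) * (ENNReal.ofReal a * fE ν r) := by
    intro j
    have hw : ∀ v : {v : Node // v.length = j}, wgt 2 (r ++ v.1) = realW (R + j) := by
      intro v
      show ((1:ℝ) + ((r ++ v.1).length : ℝ)) ^ (-(2:ℝ)) = _
      rw [List.length_append, v.2]
      rfl
    calc ∑' v : {v : Node // v.length = j}, ENNReal.ofReal (wgt 2 (r ++ v.1) * g (r ++ v.1))
        = ∑' v : {v : Node // v.length = j},
          ENNReal.ofReal (realW (R + j)) * ENNReal.ofReal (g (r ++ v.1)) := by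
          apply tsum_congr
          intro v
          rw [hw v, ENNReal.ofReal_mul (realW_nonneg _)]
      _ = ENNReal.ofReal (realW (R + j)) * ∑' v : {v : Node // v.length = j},
          ENNReal.ofReal (g (r ++ v.1)) := ENNReal.tsum_mul_left
      _ ≤ ENNReal.ofReal (realW (R + j)) * (ENNReal.ofReal a * fE ν r) := by
          apply mul_le_mul_right
          calc ∑' v : {v : Node // v.length = j}, ENNReal.ofReal (g (r ++ v.1))
              ≤ ∑' v : {v : Node // v.length = j}, ENNReal.ofReal a * fE ν (r ++ v.1) := by
                apply Summable.tsum_le_tsum _ ENNReal.summable ENNReal.summable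
                intro v
                rw [fE_eq hν hs, ← ENNReal.ofReal_mul ha]
                exact ENNReal.ofReal_le_ofReal (hg _ (r.prefix_append v.1)).2
            _ = ENNReal.ofReal a * ∑' v : {v : Node // v.length = j}, fE ν (r ++ v.1) :=
                ENNReal.tsum_mul_left
            _ ≤ ENNReal.ofReal a * fE ν r := mul_le_mul_right (level_le r j) _
  calc ∑' (j : ℕ), ∑' v : {v : Node // v.length = j},
      ENNReal.ofReal (wgt 2 (r ++ v.1) * g (r ++ v.1))
      ≤ ∑' j : ℕ, ENNReal.ofReal (realW (R + j)) * (ENNReal.ofReal a * fE ν r) :=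
        Summable.tsum_le_tsum hlevel ENNReal.summable ENNReal.summable
    _ = (∑' j : ℕ, ENNReal.ofReal (realW (R + j))) * (ENNReal.ofReal a * fE ν r) :=
        ENNReal.tsum_mul_right
    _ ≤ ENNReal.ofReal (2 / (1 + (R:ℝ))) * (ENNReal.ofReal a * fE ν r) :=
        mul_le_mul_left (tail_weight R) _

lemma global_weighted (hν : ∀ t, 0 ≤ ν t) (hs : Summable ν) (a : ℝ) (ha : 0 ≤ a)
    (g : Node → ℝ) (hg : ∀ t : Node, 0 ≤ g t ∧ g t ≤ a * Vstar ν t) :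
    ∑' t : Node, ENNReal.ofReal (wgt 2 t * g t)
      ≤ ENNReal.ofReal 2 * (ENNReal.ofReal a * fE ν ([] : Node)) := by
  have e := (Equiv.subtypeUnivEquiv (fun t : Node => List.nil_prefix)).symm.tsum_eq
    (fun t : {t : Node // ([] : Node) <+: t} => ENNReal.ofReal (wgt 2 t.1 * g t.1))
  calc ∑' t : Node, ENNReal.ofReal (wgt 2 t * g t)
      = ∑' t : {t : Node // ([] : Node) <+: t}, ENNReal.ofReal (wgt 2 t.1 * g t.1) := e
    _ ≤ ENNReal.ofReal (2 / (1 + ((List.length ([] : Node)):ℝ))) *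
        (ENNReal.ofReal a * fE ν ([] : Node)) :=
        subtree_weighted hν hs [] a ha g (fun t _ => hg t)
    _ = ENNReal.ofReal 2 * (ENNReal.ofReal a * fE ν ([] : Node)) := by norm_num

def sub2 (c : Node → ℕ) : Prop := ∀ t : Node, c (t ++ [false]) + c (t ++ [true]) ≤ c t

lemma sub2_step {c : Node → ℕ} (h : sub2 c) (t : Node) (b : Bool) : c (t ++ [b]) ≤ c t := by
  cases b
  · exact le_trans (Nat.le_add_right _ _) (h t)
  · exact le_trans (Nat.le_add_left _ _) (h t)

lemma sub2_mono {c : Node → ℕ} (h : sub2 c) : ∀ (v t : Node), c (t ++ v) ≤ c t := by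
  intro v
  induction v with
  | nil => intro t; simp
  | cons b v ih =>
    intro t
    have h1 : c ((t ++ [b]) ++ v) ≤ c (t ++ [b]) := ih _
    have h2 : c (t ++ [b]) ≤ c t := sub2_step h t b
    calc c (t ++ (b :: v)) = c ((t ++ [b]) ++ v) := by
          rw [List.append_assoc]; rfl
      _ ≤ c t := le_trans h1 h2

def mval (c : Node → ℕ) (t : Node) : ℕ := c t - (c (t ++ [false]) + c (t ++ [true]))

def Ecode : ℕ → (Node → ℕ) → Node → List Bool
  | 0, _, _ => [false]
  | fuel+1, c, t =>
    if c t = 0 then [false]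
    else true :: (List.replicate (mval c t) true ++ false ::
      (Ecode fuel c (t ++ [false]) ++ Ecode fuel c (t ++ [true])))

def countSupp : ℕ → (Node → ℕ) → Node → ℕ
  | 0, _, _ => 0
  | fuel+1, c, t => if c t = 0 then 0
    else 1 + countSupp fuel c (t ++ [false]) + countSupp fuel c (t ++ [true])

def sumM : ℕ → (Node → ℕ) → Node → ℕ
  | 0, _, _ => 0
  | fuel+1, c, t => if c t = 0 then 0
    else mval c t + sumM fuel c (t ++ [false]) + sumM fuel c (t ++ [true])

lemma len_Ecode (fuel : ℕ) (c : Node → ℕ) (t : Node) :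
    (Ecode fuel c t).length ≤ 1 + 4 * countSupp fuel c t + sumM fuel c t := by
  induction fuel generalizing t with
  | zero => simp [Ecode, countSupp, sumM]
  | succ fuel ih =>
    by_cases h : c t = 0
    · simp [Ecode, countSupp, sumM, h]
    · have i0 := ih (t ++ [false])
      have i1 := ih (t ++ [true])
      simp only [Ecode, countSupp, sumM, h, if_neg, if_false, List.length_cons,
        List.length_append, List.length_replicate]
      omega

lemma sumM_le {c : Node → ℕ} (hs : sub2 c) (fuel : ℕ) (t : Node) :
    sumM fuel c t ≤ c t := by
  induction fuel generalizing t with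
  | zero => simp [sumM]
  | succ fuel ih =>
    by_cases h : c t = 0
    · simp [sumM, h]
    · have i0 := ih (t ++ [false])
      have i1 := ih (t ++ [true])
      have hsub := hs t
      simp only [sumM, h, if_neg, if_false, mval]
      omega

lemma countSupp_zero {c : Node → ℕ} (fuel : ℕ) (t : Node) (h : c t = 0) :
    countSupp fuel c t = 0 := by
  cases fuel <;> simp [countSupp, h]

lemma countSupp_bound {c : Node → ℕ} {q : ℕ} (hs : sub2 c)
    (hth : ∀ t : Node, c t ≠ 0 → q * (1 + t.length) ≤ c t) (fuel : ℕ) (t : Node)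
    (h : c t ≠ 0) : q * (countSupp fuel c t + t.length) ≤ c t := by
  induction fuel generalizing t with
  | zero =>
    simp only [countSupp, Nat.zero_add]
    calc q * t.length ≤ q * (1 + t.length) := Nat.mul_le_mul_left _ (by omega)
      _ ≤ c t := hth t h
  | succ fuel ih =>
    have hlen : ∀ b : Bool, (t ++ [b]).length = t.length + 1 := by intro b; simp
    by_cases h0 : c (t ++ [false]) = 0 <;> by_cases h1 : c (t ++ [true]) = 0
    · simp only [countSupp, h, if_neg, if_false, countSupp_zero fuel _ h0,
        countSupp_zero fuel _ h1]
      calc q * (1 + 0 + 0 + t.length) = q * (1 + t.length) := by ring_nf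
        _ ≤ c t := hth t h
    · have i1 := ih (t ++ [true]) h1
      rw [hlen true] at i1
      have hle : c (t ++ [true]) ≤ c t := sub2_step hs t true
      simp only [countSupp, h, if_neg, if_false, countSupp_zero fuel _ h0]
      calc q * (1 + 0 + countSupp fuel c (t ++ [true]) + t.length)
          = q * (countSupp fuel c (t ++ [true]) + (t.length + 1)) := by ring_nf
        _ ≤ c (t ++ [true]) := i1
        _ ≤ c t := hle
    · have i0 := ih (t ++ [false]) h0
      rw [hlen false] at i0
      have hle : c (t ++ [false]) ≤ c t := sub2_step hs t false
      simp only [countSupp, h, if_neg, if_false, countSupp_zero fuel _ h1]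
      calc q * (1 + countSupp fuel c (t ++ [false]) + 0 + t.length)
          = q * (countSupp fuel c (t ++ [false]) + (t.length + 1)) := by ring_nf
        _ ≤ c (t ++ [false]) := i0
        _ ≤ c t := hle
    · have i0 := ih (t ++ [false]) h0
      have i1 := ih (t ++ [true]) h1
      rw [hlen false] at i0
      rw [hlen true] at i1
      have hsub := hs t
      simp only [countSupp, h, if_neg, if_false]
      calc q * (1 + countSupp fuel c (t ++ [false]) + countSupp fuel c (t ++ [true]) + t.length)
          ≤ q * ((countSupp fuel c (t ++ [false]) + (t.length + 1))
              + (countSupp fuel c (t ++ [true]) + (t.length + 1))) :=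
            Nat.mul_le_mul_left _ (by omega)
        _ = q * (countSupp fuel c (t ++ [false]) + (t.length + 1))
              + q * (countSupp fuel c (t ++ [true]) + (t.length + 1)) := by ring
        _ ≤ c (t ++ [false]) + c (t ++ [true]) := Nat.add_le_add i0 i1
        _ ≤ c t := hsub

lemma unary_inj : ∀ (a b : ℕ) (x y : List Bool),
    List.replicate a true ++ false :: x = List.replicate b true ++ false :: y →
    a = b ∧ x = y := by
  intro a
  induction a with
  | zero =>
    intro b x y h
    cases b with
    | zero => simpa using h
    | succ b => simp [List.replicate_succ] at h
  | succ a ih =>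
    intro b x y h
    cases b with
    | zero => simp [List.replicate_succ] at h
    | succ b =>
      simp only [List.replicate_succ, List.cons_append, List.cons.injEq, true_and] at h
      obtain ⟨h1, h2⟩ := ih b x y h
      exact ⟨by omega, h2⟩

lemma Ecode_delim : ∀ (fuel : ℕ) (c c' : Node → ℕ) (t t' : Node) (l l' : List Bool),
    sub2 c → sub2 c' →
    (∀ u : Node, c (t ++ u) ≠ 0 → u.length < fuel) →
    (∀ u : Node, c' (t' ++ u) ≠ 0 → u.length < fuel) →
    Ecode fuel c t ++ l = Ecode fuel c' t' ++ l' →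
    (∀ u : Node, c (t ++ u) = c' (t' ++ u)) ∧ l = l' := by
  intro fuel
  induction fuel with
  | zero =>
    intro c c' t t' l l' _ _ hd hd' h
    constructor
    · intro u
      have h1 : c (t ++ u) = 0 := by
        by_contra hc
        exact absurd (hd u hc) (by omega)
      have h2 : c' (t' ++ u) = 0 := by
        by_contra hc
        exact absurd (hd' u hc) (by omega)
      rw [h1, h2]
    · simpa [Ecode] using h
  | succ fuel ih =>
    intro c c' t t' l l' hs hs' hd hd' h
    by_cases h0 : c t = 0 <;> by_cases h0' : c' t' = 0
    · constructor
      · intro u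
        have e1 : c (t ++ u) = 0 := Nat.le_zero.1 (h0 ▸ sub2_mono hs u t)
        have e2 : c' (t' ++ u) = 0 := Nat.le_zero.1 (h0' ▸ sub2_mono hs' u t')
        rw [e1, e2]
      · simpa [Ecode, h0, h0'] using h
    · exfalso; simp [Ecode, h0, h0'] at h
    · exfalso; simp [Ecode, h0, h0'] at h
    · -- both nonzero
      simp only [Ecode, h0, h0', if_neg, if_false, List.cons_append, List.cons.injEq,
        true_and, List.append_assoc, List.cons_append] at h
      -- h : replicate (mval c t) true ++ false :: (E0 ++ (E1 ++ l)) = ...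
      have h' := h
      rw [show (false :: (Ecode fuel c (t ++ [false]) ++ (Ecode fuel c (t ++ [true]) ++ l)))
          = false :: (Ecode fuel c (t ++ [false]) ++ (Ecode fuel c (t ++ [true]) ++ l)) from rfl] at h'
      obtain ⟨hm, htail⟩ := unary_inj _ _ _ _ h
      have hdf : ∀ (b : Bool) (u : Node), c ((t ++ [b]) ++ u) ≠ 0 → u.length < fuel := by
        intro b u hc
        rw [List.append_assoc] at hc
        have := hd ([b] ++ u) hc
        simpa using this
      have hdf' : ∀ (b : Bool) (u : Node), c' ((t' ++ [b]) ++ u) ≠ 0 → u.length < fuel := by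
        intro b u hc
        rw [List.append_assoc] at hc
        have := hd' ([b] ++ u) hc
        simpa using this
      obtain ⟨hc0, htail2⟩ := ih c c' (t ++ [false]) (t' ++ [false]) _ _ hs hs'
        (hdf false) (hdf' false) htail
      obtain ⟨hc1, hll⟩ := ih c c' (t ++ [true]) (t' ++ [true]) _ _ hs hs'
        (hdf true) (hdf' true) htail2
      refine ⟨?_, hll⟩
      intro u
      match u with
      | [] =>
        have e0 := hc0 []
        have e1 := hc1 []
        simp only [List.append_nil] at e0 e1
        have hsub := hs t
        have hsub' := hs' t'
        simp only [mval] at hm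
        simp only [List.append_nil]
        omega
      | b :: u =>
        have : t ++ (b :: u) = (t ++ [b]) ++ u := by rw [List.append_assoc]; rfl
        have that : t' ++ (b :: u) = (t' ++ [b]) ++ u := by rw [List.append_assoc]; rfl
        rw [this, that]
        cases b
        · exact hc0 u
        · exact hc1 u
def Adm (s q : ℕ) (c : Node → ℕ) : Prop :=
  c [] ≤ s ∧ sub2 c ∧ ∀ t : Node, c t ≠ 0 → q * (1 + t.length) ≤ c t

lemma Adm.le_root {s q : ℕ} {c : Node → ℕ} (h : Adm s q c) (u : Node) : c u ≤ s := by
  have : c ([] ++ u) ≤ c [] := sub2_mono h.2.1 u []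
  simpa using le_trans this h.1

lemma Adm.depth {s q : ℕ} (hq : 1 ≤ q) {c : Node → ℕ} (h : Adm s q c) :
    ∀ u : Node, c u ≠ 0 → u.length < s := by
  intro u hu
  have h1 : q * (1 + u.length) ≤ c u := h.2.2 u hu
  have h2 : c u ≤ s := h.le_root u
  have h3 : 1 * (1 + u.length) ≤ q * (1 + u.length) := Nat.mul_le_mul_right _ hq
  omega

lemma Ecode_inj {s q : ℕ} (hq : 1 ≤ q) {c c' : Node → ℕ} (hc : Adm s q c) (hc' : Adm s q c')
    (h : Ecode s c [] = Ecode s c' []) : c = c' := by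
  have key := Ecode_delim s c c' [] [] [] [] hc.2.1 hc'.2.1
    (fun u hu => by simpa using hc.depth hq (([] : Node) ++ u) (by simpa using hu))
    (fun u hu => by simpa using hc'.depth hq (([] : Node) ++ u) (by simpa using hu))
    (by rw [List.append_nil, List.append_nil, h])
  funext u
  simpa using key.1 u

def listToFun (L : ℕ) (l : List Bool) : Fin (L + 1) → Option Bool :=
  fun i => if h : (i : ℕ) < l.length then some (l.get ⟨i, h⟩) else none

lemma listToFun_inj {L : ℕ} {l l' : List Bool} (h : l.length ≤ L) (h' : l'.length ≤ L)
    (he : listToFun L l = listToFun L l') : l = l' := by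
  have hlen : l.length = l'.length := by
    by_contra hne
    rcases Nat.lt_or_ge l.length l'.length with hlt | hge
    · have := congrFun he ⟨l.length, by omega⟩
      simp only [listToFun] at this
      rw [dif_neg (by simp), dif_pos (by simpa using hlt)] at this
      cases this
    · have hlt : l'.length < l.length := by omega
      have := congrFun he ⟨l'.length, by omega⟩
      simp only [listToFun] at this
      rw [dif_pos (by simpa using hlt), dif_neg (by simp)] at this
      cases this
  apply List.ext_get hlen
  intro i h1 h2
  have := congrFun he ⟨i, by omega⟩
  simp only [listToFun] at this
  rw [dif_pos (by simpa using h1), dif_pos (by simpa using h2)] at this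
  simpa using this

def AdmSet (s q : ℕ) : Set (Node → ℕ) := {c | Adm s q c}

lemma len_Ecode_Adm {s q : ℕ} (hq : 1 ≤ q) {c : Node → ℕ} (hc : Adm s q c) :
    (Ecode s c []).length ≤ 1 + 4 * (s / q) + s := by
  have h1 := len_Ecode s c []
  have h2 : countSupp s c [] ≤ s / q := by
    by_cases h0 : c [] = 0
    · rw [countSupp_zero s [] h0]; exact Nat.zero_le _
    · have := countSupp_bound hc.2.1 hc.2.2 s ([] : Node) h0
      simp only [List.length_nil, Nat.add_zero] at this
      rw [Nat.le_div_iff_mul_le (by omega)]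
      calc countSupp s c [] * q = q * countSupp s c [] := Nat.mul_comm _ _
        _ ≤ c [] := by simpa using this
        _ ≤ s := hc.1
  have h3 : sumM s c [] ≤ s := le_trans (sumM_le hc.2.1 s []) hc.1
  omega

lemma admSet_finite_card (s q : ℕ) (hq : 1 ≤ q) :
    ∃ F : Finset (Node → ℕ), (∀ c : Node → ℕ, Adm s q c → c ∈ F) ∧
      F.card ≤ 3 ^ (1 + 4 * (s / q) + s + 1) := by
  classical
  set L := 1 + 4 * (s / q) + s with hL
  have hinj : Function.Injective
      (fun c : AdmSet s q => listToFun L (Ecode s c.1 [])) := by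
    rintro ⟨c, hc⟩ ⟨c', hc'⟩ h
    have he : Ecode s c [] = Ecode s c' [] :=
      listToFun_inj (len_Ecode_Adm hq hc) (len_Ecode_Adm hq hc') h
    exact Subtype.ext (Ecode_inj hq hc hc' he)
  haveI : Finite (AdmSet s q) := Finite.of_injective _ hinj
  have hfin : (AdmSet s q).Finite := Set.toFinite _
  refine ⟨hfin.toFinset, fun c hc => hfin.mem_toFinset.2 hc, ?_⟩
  have h1 : hfin.toFinset.card = Nat.card (AdmSet s q) := by
    rw [Nat.card_eq_card_finite_toFinset hfin]
  rw [h1]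
  calc Nat.card (AdmSet s q) ≤ Nat.card (Fin (L + 1) → Option Bool) :=
      Nat.card_le_card_of_injective _ hinj
    _ = 3 ^ (L + 1) := by
      rw [Nat.card_eq_fintype_card]
      simp
section Construction
variable {ν : Node → ℝ} (s q : ℕ)

noncomputable def cfn (s : ℕ) (ν : Node → ℝ) (t : Node) : ℕ := ⌊(s:ℝ) * Vstar ν t⌋₊

noncomputable def chat (s q : ℕ) (ν : Node → ℝ) (t : Node) : ℕ :=
  if q * (1 + t.length) ≤ cfn s ν t then cfn s ν t else 0

variable (hν : ∀ t, 0 ≤ ν t) (hsum : Summable ν) (hmass : ∑' t, ν t ≤ 1) (hs1 : 1 ≤ s)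

include hν hsum hmass in
lemma mass_le_one : fE ν ([] : Node) ≤ 1 := by
  calc fE ν ([] : Node) ≤ ∑' u : Node, ENNReal.ofReal (ν u) :=
        ENNReal.tsum_comp_le_tsum_of_injective Subtype.coe_injective _
    _ = ENNReal.ofReal (∑' u : Node, ν u) := (ENNReal.ofReal_tsum_of_nonneg hν hsum).symm
    _ ≤ ENNReal.ofReal 1 := ENNReal.ofReal_le_ofReal hmass
    _ = 1 := ENNReal.ofReal_one

include hν hsum hmass in
lemma vstar_le_one (t : Node) : Vstar ν t ≤ 1 := by
  have h1 : fE ν t ≤ 1 := le_trans (fE_mono t.nil_prefix) (mass_le_one hν hsum hmass)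
  rw [fE_eq hν hsum, ← ENNReal.ofReal_one] at h1
  exact (ENNReal.ofReal_le_ofReal_iff (by norm_num)).1 h1

include hν hsum in
lemma vstar_subadd (t : Node) :
    Vstar ν (t ++ [false]) + Vstar ν (t ++ [true]) ≤ Vstar ν t := by
  have h := children_le (ν := ν) t
  rw [fE_eq hν hsum, fE_eq hν hsum, fE_eq hν hsum,
    ← ENNReal.ofReal_add (vstar_nonneg hν _) (vstar_nonneg hν _)] at h
  exact (ENNReal.ofReal_le_ofReal_iff (vstar_nonneg hν _)).1 h

include hν hsum in
lemma vstar_mono {t u : Node} (h : t <+: u) : Vstar ν u ≤ Vstar ν t := by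
  have h1 := fE_mono (ν := ν) h
  rw [fE_eq hν hsum, fE_eq hν hsum] at h1
  exact (ENNReal.ofReal_le_ofReal_iff (vstar_nonneg hν _)).1 h1

include hν in
lemma cfn_le (t : Node) : (cfn s ν t : ℝ) ≤ s * Vstar ν t :=
  Nat.floor_le (by
    have := vstar_nonneg hν t
    positivity)

lemma cfn_lt (t : Node) : (s:ℝ) * Vstar ν t < cfn s ν t + 1 := Nat.lt_floor_add_one _

include hν hsum in
lemma cfn_sub2 : sub2 (cfn s ν) := by
  intro t
  have h := vstar_subadd hν hsum t
  have h0 := cfn_le s hν (t ++ [false])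
  have h1 := cfn_le s hν (t ++ [true])
  apply Nat.le_floor
  push_cast
  nlinarith [(Nat.cast_nonneg s : (0:ℝ) ≤ s)]

include hν hsum in
lemma cfn_mono {t u : Node} (h : t <+: u) : cfn s ν u ≤ cfn s ν t :=
  Nat.floor_le_floor (mul_le_mul_of_nonneg_left (vstar_mono hν hsum h) (Nat.cast_nonneg s))

include hν hsum hmass in
lemma cfn_root : cfn s ν [] ≤ s := by
  have h := vstar_le_one hν hsum hmass ([] : Node)
  have : (s:ℝ) * Vstar ν [] ≤ (s:ℝ) := by
    nlinarith [(Nat.cast_nonneg s : (0:ℝ) ≤ s)]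
  calc cfn s ν [] ≤ ⌊(s:ℝ)⌋₊ := Nat.floor_le_floor this
    _ = s := Nat.floor_natCast s

lemma chat_le_cfn (t : Node) : chat s q ν t ≤ cfn s ν t := by
  unfold chat
  split <;> omega

include hν hsum hmass in
lemma chat_adm : Adm s q (chat s q ν) := by
  refine ⟨le_trans (chat_le_cfn (ν := ν) s q []) (cfn_root s hν hsum hmass), ?_, ?_⟩
  · intro t
    by_cases hk : q * (1 + t.length) ≤ cfn s ν t
    · have h0 := chat_le_cfn (ν := ν) s q (t ++ [false])
      have h1 := chat_le_cfn (ν := ν) s q (t ++ [true])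
      have hsub := cfn_sub2 s hν hsum t
      have : chat s q ν t = cfn s ν t := if_pos hk
      omega
    · have hmain : chat s q ν t = 0 := if_neg hk
      have hchild : ∀ b : Bool, chat s q ν (t ++ [b]) = 0 := by
        intro b
        apply if_neg
        intro hcon
        apply hk
        have hm : cfn s ν (t ++ [b]) ≤ cfn s ν t := cfn_mono s hν hsum (t.prefix_append [b])
        have hlen : (t ++ [b]).length = t.length + 1 := by simp
        rw [hlen] at hcon
        have : q * (1 + t.length) ≤ q * (1 + (t.length + 1)) := by
          apply Nat.mul_le_mul_left; omega
        omega
      rw [hmain, hchild false, hchild true]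
  · intro t ht
    have hdef : chat s q ν t = if q * (1 + t.length) ≤ cfn s ν t then cfn s ν t else 0 := rfl
    by_cases hk : q * (1 + t.length) ≤ cfn s ν t
    · rw [hdef, if_pos hk]
      exact hk
    · rw [hdef, if_neg hk] at ht
      exact absurd rfl ht


include hν hsum hmass hs1 in
lemma T1_bound :
    ∑' t : Node, ENNReal.ofReal (wgt 2 t * (Vstar ν t - (cfn s ν t : ℝ) / s)^2)
      ≤ ENNReal.ofReal (2 / s) := by
  have hspos : (0:ℝ) < s := by exact_mod_cast hs1
  have hg : ∀ t : Node, 0 ≤ (Vstar ν t - (cfn s ν t : ℝ) / s)^2 ∧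
      (Vstar ν t - (cfn s ν t : ℝ) / s)^2 ≤ (1/(s:ℝ)) * Vstar ν t := by
    intro t
    have h1 : (cfn s ν t : ℝ)/s ≤ Vstar ν t := by
      rw [div_le_iff₀ hspos]
      calc (cfn s ν t : ℝ) ≤ s * Vstar ν t := cfn_le s hν t
        _ = Vstar ν t * s := by ring
    have h2 : Vstar ν t - (cfn s ν t : ℝ)/s ≤ 1/s := by
      have hlt := cfn_lt s (ν := ν) t
      have : Vstar ν t ≤ ((cfn s ν t : ℝ) + 1)/s := by
        rw [le_div_iff₀ hspos]
        nlinarith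
      rw [add_div] at this
      linarith
    have h3 : 0 ≤ Vstar ν t - (cfn s ν t : ℝ)/s := by linarith
    refine ⟨sq_nonneg _, ?_⟩
    have h4 : Vstar ν t - (cfn s ν t : ℝ)/s ≤ Vstar ν t := by
      have : 0 ≤ (cfn s ν t:ℝ)/s := by positivity
      linarith
    nlinarith
  calc ∑' t : Node, ENNReal.ofReal (wgt 2 t * (Vstar ν t - (cfn s ν t : ℝ) / s)^2)
      ≤ ENNReal.ofReal 2 * (ENNReal.ofReal (1/(s:ℝ)) * fE ν ([] : Node)) :=
        global_weighted hν hsum _ (by positivity) _ hg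
    _ ≤ ENNReal.ofReal 2 * (ENNReal.ofReal (1/(s:ℝ)) * 1) :=
        mul_le_mul_right (mul_le_mul_right (mass_le_one hν hsum hmass) _) _
    _ = ENNReal.ofReal (2/s) := by
        rw [mul_one, ← ENNReal.ofReal_mul (by norm_num)]
        congr 1
        ring

def Disc (s q : ℕ) (ν : Node → ℝ) : Set Node :=
  {t | cfn s ν t ≠ 0 ∧ cfn s ν t < q * (1 + t.length)}

def Tops (s q : ℕ) (ν : Node → ℝ) : Set Node :=
  {r | r ∈ Disc s q ν ∧ ∀ k < r.length, List.take k r ∉ Disc s q ν}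

lemma tops_antichain :
    ∀ r ∈ Tops s q ν, ∀ r' ∈ Tops s q ν, r <+: r' → r = r' := by
  intro r hr r' hr' hpre
  by_contra hne
  have hlt : r.length < r'.length := by
    have hle : r.length ≤ r'.length := hpre.length_le
    rcases lt_or_eq_of_le hle with h | h
    · exact h
    · exact absurd (prefix_eq_of_length hpre (List.prefix_refl r') h) hne
  have htake : List.take r.length r' = r := (List.prefix_iff_eq_take.1 hpre).symm
  exact hr'.2 r.length hlt (by rw [htake]; exact hr.1)

lemma exists_top (t : Node) (ht : t ∈ Disc s q ν) :
    ∃ r, r ∈ Tops s q ν ∧ r <+: t := by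
  classical
  have hex : ∃ k, List.take k t ∈ Disc s q ν := ⟨t.length, by simpa [List.take_length] using ht⟩
  refine ⟨List.take (Nat.find hex) t, ⟨Nat.find_spec hex, ?_⟩, List.take_prefix _ _⟩
  intro j hj
  have hk0le : Nat.find hex ≤ t.length :=
    Nat.find_min' hex (by simpa [List.take_length] using ht)
  have hlen : (List.take (Nat.find hex) t).length = Nat.find hex := by
    rw [List.length_take]; omega
  rw [hlen] at hj
  have heq : List.take j (List.take (Nat.find hex) t) = List.take j t := by
    rw [List.take_take]
    congr 1
    omega
  rw [heq]
  exact Nat.find_min hex hj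

include hν hsum hmass hs1 in
lemma T2_bound (hq1 : 1 ≤ q) :
    ∑' t : Node, ENNReal.ofReal (wgt 2 t * (((cfn s ν t : ℝ) - chat s q ν t) / s)^2)
      ≤ ENNReal.ofReal (2 * q / s) := by
  classical
  have hspos : (0:ℝ) < s := by exact_mod_cast hs1
  set X : Node → ℝ≥0∞ :=
    fun t => ENNReal.ofReal (wgt 2 t * (((cfn s ν t : ℝ) - chat s q ν t)/s)^2) with hX
  have hzero : ∀ t : Node, t ∉ Disc s q ν → X t = 0 := by
    intro t hnot
    have hcc : (cfn s ν t : ℝ) - chat s q ν t = 0 := by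
      by_cases h0 : cfn s ν t = 0
      · have : chat s q ν t ≤ cfn s ν t := chat_le_cfn (ν := ν) s q t
        have h00 : chat s q ν t = 0 := by omega
        rw [h0, h00]; norm_num
      · have hge : q * (1 + t.length) ≤ cfn s ν t := by
          by_contra hcon
          exact hnot ⟨h0, by omega⟩
        have : chat s q ν t = cfn s ν t := if_pos hge
        rw [this]; ring
    simp [hX, hcc]
  have hsupp : Function.support X ⊆ Disc s q ν := by
    intro t ht
    by_contra hnot
    exact ht (hzero t hnot)
  rw [show (∑' t : Node, ENNReal.ofReal (wgt 2 t * (((cfn s ν t : ℝ) - chat s q ν t)/s)^2))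
    = ∑' t : Node, X t from rfl, ← tsum_subtype_eq_of_support_subset hsupp]
  -- injection into tops-sigma
  have hchoice : ∀ t : {t : Node // t ∈ Disc s q ν},
      ∃ r, r ∈ Tops s q ν ∧ r <+: t.1 := fun t => exists_top s q t.1 t.2
  let top : {t : Node // t ∈ Disc s q ν} → {r : Node // r ∈ Tops s q ν} :=
    fun t => ⟨Classical.choose (hchoice t), (Classical.choose_spec (hchoice t)).1⟩
  let ι : {t : Node // t ∈ Disc s q ν} →
      (Σ r : {r : Node // r ∈ Tops s q ν}, {u : Node // r.1 <+: u}) :=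
    fun t => ⟨top t, ⟨t.1, (Classical.choose_spec (hchoice t)).2⟩⟩
  have hinj : Function.Injective ι := by
    intro a b h
    apply Subtype.ext
    exact congrArg (fun p : (Σ r : {r : Node // r ∈ Tops s q ν},
      {u : Node // r.1 <+: u}) => (p.2.1 : Node)) h
  calc ∑' t : {t : Node // t ∈ Disc s q ν}, X t.1
      ≤ ∑' p : (Σ r : {r : Node // r ∈ Tops s q ν}, {u : Node // r.1 <+: u}), X p.2.1 :=
        ENNReal.tsum_comp_le_tsum_of_injective hinj _
    _ = ∑' (r : {r : Node // r ∈ Tops s q ν}), ∑' (u : {u : Node // r.1 <+: u}), X u.1 :=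
        ENNReal.tsum_sigma' _
    _ ≤ ∑' (r : {r : Node // r ∈ Tops s q ν}), ENNReal.ofReal (2*q/s) * fE ν r.1 := by
        apply Summable.tsum_le_tsum _ ENNReal.summable ENNReal.summable
        rintro ⟨r, hr⟩
        have hrd : r ∈ Disc s q ν := hr.1
        have hcr : (cfn s ν r : ℝ) < q * (1 + r.length) := by
          have := hrd.2
          push_cast
          exact_mod_cast this
        have hbound : ∀ u : Node, r <+: u →
            0 ≤ (((cfn s ν u : ℝ) - chat s q ν u)/s)^2 ∧
            (((cfn s ν u : ℝ) - chat s q ν u)/s)^2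
              ≤ ((q:ℝ) * (1 + r.length) / s) * Vstar ν u := by
          intro u hru
          refine ⟨sq_nonneg _, ?_⟩
          have h1 : (0:ℝ) ≤ (cfn s ν u : ℝ) - chat s q ν u := by
            have h := chat_le_cfn (ν := ν) s q u
            have : (chat s q ν u : ℝ) ≤ cfn s ν u := by exact_mod_cast h
            linarith
          have hmon : (cfn s ν u : ℝ) ≤ cfn s ν r := by
            exact_mod_cast cfn_mono s hν hsum hru
          have hfu : (cfn s ν u : ℝ) ≤ s * Vstar ν u := cfn_le s hν u
          have hd0 : (0:ℝ) ≤ ((cfn s ν u : ℝ) - chat s q ν u) / s :=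
            div_nonneg h1 (le_of_lt hspos)
          have ha : ((cfn s ν u : ℝ) - chat s q ν u)/s ≤ (q:ℝ)*(1+r.length)/s := by
            gcongr
            have h0 : (0:ℝ) ≤ (chat s q ν u : ℝ) := Nat.cast_nonneg _
            linarith
          have hb : ((cfn s ν u : ℝ) - chat s q ν u)/s ≤ Vstar ν u := by
            rw [div_le_iff₀ hspos]
            have h0 : (0:ℝ) ≤ (chat s q ν u : ℝ) := Nat.cast_nonneg _
            nlinarith
          calc (((cfn s ν u : ℝ) - chat s q ν u)/s)^2
              = (((cfn s ν u : ℝ) - chat s q ν u)/s) * (((cfn s ν u : ℝ) - chat s q ν u)/s) :=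
              sq ((((cfn s ν u : ℝ) - chat s q ν u))/s)
            _ ≤ ((q:ℝ) * (1 + r.length) / s) * Vstar ν u :=
              mul_le_mul ha hb hd0 (by positivity)
        calc ∑' (u : {u : Node // r <+: u}), X u.1
            ≤ ENNReal.ofReal (2 / (1 + (r.length:ℝ))) *
              (ENNReal.ofReal ((q:ℝ) * (1 + r.length) / s) * fE ν r) :=
              subtree_weighted hν hsum r _ (by positivity) _ hbound
          _ = ENNReal.ofReal (2*q/s) * fE ν r := by
              rw [← mul_assoc, ← ENNReal.ofReal_mul (by positivity)]
              congr 2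
              have h1r : (0:ℝ) < 1 + r.length := by positivity
              field_simp
    _ = ENNReal.ofReal (2*q/s) * ∑' (r : {r : Node // r ∈ Tops s q ν}), fE ν r.1 :=
        ENNReal.tsum_mul_left
    _ ≤ ENNReal.ofReal (2*q/s) * 1 := by
        apply mul_le_mul_right
        calc ∑' (r : {r : Node // r ∈ Tops s q ν}), fE ν r.1
            ≤ ∑' u : Node, ENNReal.ofReal (ν u) :=
              antichain_le (Tops s q ν) (tops_antichain s q)
          _ = ENNReal.ofReal (∑' u : Node, ν u) := (ENNReal.ofReal_tsum_of_nonneg hν hsum).symm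
          _ ≤ ENNReal.ofReal 1 := ENNReal.ofReal_le_ofReal hmass
          _ = 1 := ENNReal.ofReal_one
    _ = ENNReal.ofReal (2*q/s) := mul_one _

end Construction

lemma max_sub_max (x : ℝ) : max x 0 - max (-x) 0 = x := by
  rcases le_total 0 x with h | h
  · rw [max_eq_left h, max_eq_right (neg_nonpos.2 h), sub_zero]
  · rw [max_eq_right h, max_eq_left (neg_nonneg.2 h), zero_sub, neg_neg]

lemma summable_pos {μ : Node → ℝ} (hμ : MemL1 μ) : Summable (fun u => max (μ u) 0) :=
  Summable.of_nonneg_of_le (fun u => le_max_right _ _)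
    (fun u => max_le (le_abs_self _) (abs_nonneg _)) hμ

lemma summable_neg {μ : Node → ℝ} (hμ : MemL1 μ) : Summable (fun u => max (-μ u) 0) :=
  Summable.of_nonneg_of_le (fun u => le_max_right _ _)
    (fun u => max_le (neg_le_abs _) (abs_nonneg _)) hμ

lemma mass_pos_le {μ : Node → ℝ} (hμ : MemL1 μ) (h1 : l1Norm μ ≤ 1) :
    ∑' u, max (μ u) 0 ≤ 1 :=
  le_trans (Summable.tsum_le_tsum (fun u => max_le (le_abs_self _) (abs_nonneg _))
    (summable_pos hμ) hμ) h1

lemma mass_neg_le {μ : Node → ℝ} (hμ : MemL1 μ) (h1 : l1Norm μ ≤ 1) :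
    ∑' u, max (-μ u) 0 ≤ 1 :=
  le_trans (Summable.tsum_le_tsum (fun u => max_le (neg_le_abs _) (abs_nonneg _))
    (summable_neg hμ) hμ) h1

lemma vstar_decomp {μ : Node → ℝ} (hμ : MemL1 μ) (t : Node) :
    Vstar μ t = Vstar (fun u => max (μ u) 0) t - Vstar (fun u => max (-μ u) 0) t := by
  have h1 : Summable (fun u : {u : Node // t <+: u} => max (μ u.1) 0) :=
    (summable_pos hμ).subtype _
  have h2 : Summable (fun u : {u : Node // t <+: u} => max (-μ u.1) 0) :=
    (summable_neg hμ).subtype _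
  rw [Vstar, Vstar, Vstar, ← Summable.tsum_sub h1 h2]
  exact tsum_congr fun u => (max_sub_max (μ u.1)).symm

lemma ofReal_add_le4 (x1 x2 x3 x4 : ℝ) :
    ENNReal.ofReal (x1 + (x2 + (x3 + x4))) ≤ ENNReal.ofReal x1 +
      (ENNReal.ofReal x2 + (ENNReal.ofReal x3 + ENNReal.ofReal x4)) :=
  le_trans ENNReal.ofReal_add_le (add_le_add le_rfl
    (le_trans ENNReal.ofReal_add_le (add_le_add le_rfl ENNReal.ofReal_add_le)))

lemma tsum_ofReal_four_mul (s : ℕ) (x : Node → ℝ) :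
    ∑' t : Node, ENNReal.ofReal (4 * x t) = ENNReal.ofReal 4 * ∑' t, ENNReal.ofReal (x t) := by
  rw [← ENNReal.tsum_mul_left]
  exact tsum_congr fun t => ENNReal.ofReal_mul (by norm_num)

end EP

set_option maxHeartbeats 1000000 in
/-- Critical case `β = 2`: upper bound `e_n(V*) ≤ C n^{-1/2}` for the operator
`V* : ℓ₁(T) → ℓ₂(T,W)` with weight `w(t) = (1+|t|)^{-2}`: for every radius `ε`
exceeding the bound, the image of the unit ball of `ℓ₁(T)` under `V*` can be
covered by `2^{n-1}` balls of radius `ε` in `ℓ₂(T,W)`. -/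
theorem entropy_upper_bound_critical_Vstar :
    ∃ C : ℝ, 0 < C ∧ ∀ n : ℕ, 0 < n → ∀ ε : ℝ, C * (n : ℝ) ^ (-(1 : ℝ) / 2) < ε →
      ∃ N : Finset (Node → ℝ), N.card ≤ 2 ^ (n - 1) ∧
        ∀ μ : Node → ℝ, MemL1 μ → l1Norm μ ≤ 1 →
          ∃ g ∈ N, distSqW 2 (Vstar μ) g ≤ ENNReal.ofReal (ε ^ 2) := by
  classical
  refine ⟨96, by norm_num, ?_⟩
  intro n hn ε hε
  have hn1 : (1:ℝ) ≤ (n:ℝ) := by exact_mod_cast hn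
  have hnpos : (0:ℝ) < n := by linarith
  have hsq : 0 < Real.sqrt n := Real.sqrt_pos.2 hnpos
  have hε96 : 96 / Real.sqrt n < ε := by
    have hrpow : (n:ℝ) ^ (-(1:ℝ)/2) = 1 / Real.sqrt n := by
      rw [show (-(1:ℝ)/2) = -(1/2 : ℝ) by norm_num, Real.rpow_neg (le_of_lt hnpos),
        ← Real.sqrt_eq_rpow, one_div]
    rw [hrpow] at hε
    calc 96 / Real.sqrt n = 96 * (1 / Real.sqrt n) := by ring
      _ < ε := hε
  have hεpos : 0 < ε := lt_trans (by positivity) hε96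
  have hε2 : 9216 / (n:ℝ) < ε ^ 2 := by
    have h1 : (96 / Real.sqrt n)^2 < ε^2 := by
      apply pow_lt_pow_left₀ hε96 (by positivity) (by norm_num)
    have h2 : (96 / Real.sqrt n)^2 = 9216 / n := by
      rw [div_pow, Real.sq_sqrt (le_of_lt hnpos)]
      norm_num
    linarith
  have hε2pos : (0:ℝ) < ε^2 := by positivity
  by_cases hsmall : n ≤ 1152
  · -- small n : single ball centered at 0
    refine ⟨{fun _ => 0}, by simpa using Nat.one_le_two_pow, ?_⟩
    intro μ hμ hl1
    have h8 : (8:ℝ) ≤ ε^2 := by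
      have : (8:ℝ) ≤ 9216 / n := by
        rw [le_div_iff₀ hnpos]
        have : (n:ℝ) ≤ 1152 := by exact_mod_cast hsmall
        linarith
      linarith
    set νp := fun u : Node => max (μ u) 0 with hνp
    set νm := fun u : Node => max (-μ u) 0 with hνm
    have hp : ∀ t, 0 ≤ νp t := fun t => le_max_right _ _
    have hm : ∀ t, 0 ≤ νm t := fun t => le_max_right _ _
    have hsp : Summable νp := EP.summable_pos hμ
    have hsm : Summable νm := EP.summable_neg hμ
    have hmp : ∑' u, νp u ≤ 1 := EP.mass_pos_le hμ hl1
    have hmm : ∑' u, νm u ≤ 1 := EP.mass_neg_le hμ hl1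
    refine ⟨_, Finset.mem_singleton_self _, ?_⟩
    have hw : ∀ t : Node, 0 ≤ wgt 2 t := fun t => by
      rw [EP.wgt2_eq]; exact EP.realW_nonneg _
    calc distSqW 2 (Vstar μ) (fun _ => 0)
        ≤ ∑' t : Node, (ENNReal.ofReal (wgt 2 t * (2 * Vstar νp t))
          + ENNReal.ofReal (wgt 2 t * (2 * Vstar νm t))) := by
          simp only [distSqW]
          apply Summable.tsum_le_tsum _ ENNReal.summable ENNReal.summable
          intro t
          calc ENNReal.ofReal (wgt 2 t * (Vstar μ t - (fun _ => (0:ℝ)) t) ^ 2)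
              ≤ ENNReal.ofReal (wgt 2 t * (2 * Vstar νp t) + wgt 2 t * (2 * Vstar νm t)) := by
                apply ENNReal.ofReal_le_ofReal
                have hdec := EP.vstar_decomp hμ t
                have h1 : Vstar νp t ≤ 1 := EP.vstar_le_one hp hsp hmp t
                have h2 : Vstar νm t ≤ 1 := EP.vstar_le_one hm hsm hmm t
                have h3 : 0 ≤ Vstar νp t := EP.vstar_nonneg hp t
                have h4 : 0 ≤ Vstar νm t := EP.vstar_nonneg hm t
                have key : (Vstar μ t - (fun _ => (0:ℝ)) t) ^ 2
                    ≤ 2 * Vstar νp t + 2 * Vstar νm t := by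
                  simp only [sub_zero]
                  rw [hdec]
                  nlinarith
                calc wgt 2 t * (Vstar μ t - (fun _ => (0:ℝ)) t) ^ 2
                    ≤ wgt 2 t * (2 * Vstar νp t + 2 * Vstar νm t) :=
                      mul_le_mul_of_nonneg_left key (hw t)
                  _ = wgt 2 t * (2 * Vstar νp t) + wgt 2 t * (2 * Vstar νm t) := by ring
            _ ≤ _ := ENNReal.ofReal_add_le
      _ = (∑' t : Node, ENNReal.ofReal (wgt 2 t * (2 * Vstar νp t)))
          + ∑' t : Node, ENNReal.ofReal (wgt 2 t * (2 * Vstar νm t)) := ENNReal.tsum_add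
      _ ≤ ENNReal.ofReal 2 * (ENNReal.ofReal 2 * EP.fE νp ([] : Node))
          + ENNReal.ofReal 2 * (ENNReal.ofReal 2 * EP.fE νm ([] : Node)) := by
          apply add_le_add
          · exact EP.global_weighted hp hsp 2 (by norm_num) _
              (fun t => ⟨by nlinarith [EP.vstar_nonneg hp t], le_refl _⟩)
          · exact EP.global_weighted hm hsm 2 (by norm_num) _
              (fun t => ⟨by nlinarith [EP.vstar_nonneg hm t], le_refl _⟩)
      _ ≤ ENNReal.ofReal 2 * (ENNReal.ofReal 2 * 1) + ENNReal.ofReal 2 * (ENNReal.ofReal 2 * 1) := by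
          apply add_le_add
          · exact mul_le_mul_right (mul_le_mul_right (EP.mass_le_one hp hsp hmp) _) _
          · exact mul_le_mul_right (mul_le_mul_right (EP.mass_le_one hm hsm hmm) _) _
      _ ≤ ENNReal.ofReal (ε ^ 2) := by
          rw [mul_one, ← ENNReal.ofReal_mul (by norm_num), ← ENNReal.ofReal_add (by norm_num) (by norm_num)]
          exact ENNReal.ofReal_le_ofReal (by norm_num; linarith)
  · -- main scheme
    push_neg at hsmall
    set s := ⌈(96:ℝ)/ε^2⌉₊ with hs
    set q := ⌈(s:ℝ)*ε^2/32⌉₊ with hq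
    have hspos0 : (0:ℝ) < 96/ε^2 := by positivity
    have hs1 : 1 ≤ s := Nat.ceil_pos.2 hspos0
    have hsreal : (96:ℝ)/ε^2 ≤ (s:ℝ) := Nat.le_ceil _
    have hsrpos : (0:ℝ) < (s:ℝ) := by exact_mod_cast hs1
    have hqpos0 : (0:ℝ) < (s:ℝ)*ε^2/32 := by positivity
    have hq1 : 1 ≤ q := Nat.ceil_pos.2 hqpos0
    have hqreal : (s:ℝ)*ε^2/32 ≤ (q:ℝ) := Nat.le_ceil _
    have hqub : (q:ℝ) ≤ (s:ℝ)*ε^2/32 + 1 := le_of_lt (Nat.ceil_lt_add_one (le_of_lt hqpos0))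
    have hsub : (s:ℝ) ≤ 96/ε^2 + 1 := le_of_lt (Nat.ceil_lt_add_one (le_of_lt hspos0))
    set L := 1 + 4 * (s / q) + s with hL
    obtain ⟨F, hFmem, hFcard⟩ := EP.admSet_finite_card s q hq1
    have hFcard' : F.card ≤ 3 ^ (L + 1) := by rw [hL]; exact hFcard
    refine ⟨(F ×ˢ F).image (fun p : (Node → ℕ) × (Node → ℕ) =>
      (fun t : Node => ((p.1 t : ℝ) - (p.2 t : ℝ)) / (s:ℝ))), ?_, ?_⟩
    · -- cardinality
      have hdivq : ((s/q : ℕ) : ℝ) ≤ 32/ε^2 := by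
        have hqrpos : (0:ℝ) < (q:ℝ) := by exact_mod_cast hq1
        calc ((s/q : ℕ):ℝ) ≤ (s:ℝ)/(q:ℝ) := Nat.cast_div_le
          _ ≤ (s:ℝ)/((s:ℝ)*ε^2/32) := by gcongr
          _ = 32/ε^2 := by
              field_simp
      have hncast : (1153:ℝ) ≤ (n:ℝ) := by exact_mod_cast hsmall
      have hinv : 1/ε^2 ≤ (n:ℝ)/9216 := by
        rw [div_le_div_iff₀ hε2pos (by norm_num)]
        have h9 := hε2
        rw [div_lt_iff₀ hnpos] at h9
        nlinarith
      have hkey : (4*(L:ℝ) + 5) ≤ (n:ℝ) := by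
        have hLr : (L:ℝ) = 1 + 4*((s/q:ℕ):ℝ) + (s:ℝ) := by
          rw [hL]
          push_cast
          ring
        calc (4*(L:ℝ) + 5) = 4*(1 + 4*((s/q:ℕ):ℝ) + (s:ℝ)) + 5 := by rw [hLr]
          _ ≤ 4*(1 + 4*(32/ε^2) + (96/ε^2 + 1)) + 5 := by
              have := hdivq
              have := hsub
              linarith
          _ = 13 + 896*(1/ε^2) := by ring
          _ ≤ 13 + 896*((n:ℝ)/9216) := by linarith
          _ ≤ (n:ℝ) := by linarith
      have hkeyN : 4*L + 5 ≤ n := by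
        have h' : ((4*L+5 : ℕ):ℝ) ≤ (n:ℝ) := by push_cast; linarith
        exact_mod_cast h'
      calc ((F ×ˢ F).image (fun p : (Node → ℕ) × (Node → ℕ) =>
          (fun t : Node => ((p.1 t : ℝ) - (p.2 t : ℝ)) / (s:ℝ)))).card
          ≤ (F ×ˢ F).card := Finset.card_image_le
        _ = F.card * F.card := Finset.card_product F F
        _ ≤ 3^(L+1) * 3^(L+1) := Nat.mul_le_mul hFcard' hFcard'
        _ ≤ 4^(L+1) * 4^(L+1) :=
            Nat.mul_le_mul (Nat.pow_le_pow_left (by norm_num) _)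
              (Nat.pow_le_pow_left (by norm_num) _)
        _ = 2^(4*L+4) := by
            have h44 : (4:ℕ)^(L+1) * 4^(L+1) = 4^(2*L+2) := by
              rw [← pow_add]
              congr 1
              ring
            rw [h44, show (4:ℕ) = 2^2 from rfl, ← pow_mul]
            congr 1
            ring
        _ ≤ 2^(n-1) := Nat.pow_le_pow_right (by norm_num) (by omega)
    · -- covering property
      intro μ hμ hl1
      set νp := fun u : Node => max (μ u) 0 with hνp
      set νm := fun u : Node => max (-μ u) 0 with hνm
      have hp : ∀ t, 0 ≤ νp t := fun t => le_max_right _ _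
      have hm : ∀ t, 0 ≤ νm t := fun t => le_max_right _ _
      have hsp : Summable νp := EP.summable_pos hμ
      have hsm : Summable νm := EP.summable_neg hμ
      have hmp : ∑' u, νp u ≤ 1 := EP.mass_pos_le hμ hl1
      have hmm : ∑' u, νm u ≤ 1 := EP.mass_neg_le hμ hl1
      have hw : ∀ t : Node, 0 ≤ wgt 2 t := fun t => by
        rw [EP.wgt2_eq]; exact EP.realW_nonneg _
      set gfun : Node → ℝ :=
        (fun t : Node => ((EP.chat s q νp t : ℝ) - (EP.chat s q νm t : ℝ)) / (s:ℝ)) with hg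
      refine ⟨gfun,
        Finset.mem_image.2 ⟨(EP.chat s q νp, EP.chat s q νm),
          Finset.mem_product.2 ⟨hFmem _ (EP.chat_adm s q hp hsp hmp),
            hFmem _ (EP.chat_adm s q hm hsm hmm)⟩, by rw [hg]⟩, ?_⟩
      set Af := fun t : Node => (Vstar νp t - (EP.cfn s νp t : ℝ)/(s:ℝ))^2 with hAf
      set Bf := fun t : Node => (((EP.cfn s νp t : ℝ) - EP.chat s q νp t)/(s:ℝ))^2 with hBf
      set Cf := fun t : Node => (Vstar νm t - (EP.cfn s νm t : ℝ)/(s:ℝ))^2 with hCf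
      set Df := fun t : Node => (((EP.cfn s νm t : ℝ) - EP.chat s q νm t)/(s:ℝ))^2 with hDf
      have hT1p : ∑' t : Node, ENNReal.ofReal (wgt 2 t * Af t) ≤ ENNReal.ofReal (2/(s:ℝ)) :=
        EP.T1_bound s hp hsp hmp hs1
      have hT2p : ∑' t : Node, ENNReal.ofReal (wgt 2 t * Bf t)
          ≤ ENNReal.ofReal (2*(q:ℝ)/(s:ℝ)) := EP.T2_bound s q hp hsp hmp hs1 hq1
      have hT1m : ∑' t : Node, ENNReal.ofReal (wgt 2 t * Cf t) ≤ ENNReal.ofReal (2/(s:ℝ)) :=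
        EP.T1_bound s hm hsm hmm hs1
      have hT2m : ∑' t : Node, ENNReal.ofReal (wgt 2 t * Df t)
          ≤ ENNReal.ofReal (2*(q:ℝ)/(s:ℝ)) := EP.T2_bound s q hm hsm hmm hs1 hq1
      have hpt : ∀ t : Node,
          ENNReal.ofReal (wgt 2 t * (Vstar μ t -
            ((EP.chat s q νp t : ℝ) - (EP.chat s q νm t : ℝ)) / (s:ℝ)) ^ 2)
          ≤ ENNReal.ofReal (4*(wgt 2 t * Af t)) + (ENNReal.ofReal (4*(wgt 2 t * Bf t))
            + (ENNReal.ofReal (4*(wgt 2 t * Cf t)) + ENNReal.ofReal (4*(wgt 2 t * Df t)))) := by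
        intro t
        refine le_trans (ENNReal.ofReal_le_ofReal ?_) (EP.ofReal_add_le4 _ _ _ _)
        have hdec : Vstar μ t = Vstar νp t - Vstar νm t := by
          rw [hνp, hνm]
          exact EP.vstar_decomp hμ t
        have key : (Vstar μ t - ((EP.chat s q νp t : ℝ) - (EP.chat s q νm t : ℝ)) / (s:ℝ)) ^ 2
            ≤ 4*Af t + 4*Bf t + 4*Cf t + 4*Df t := by
          rw [hdec]
          have e : Vstar νp t - Vstar νm t -
              ((EP.chat s q νp t : ℝ) - (EP.chat s q νm t : ℝ)) / (s:ℝ)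
              = ((Vstar νp t - (EP.cfn s νp t : ℝ)/(s:ℝ))
                + ((EP.cfn s νp t : ℝ) - EP.chat s q νp t)/(s:ℝ))
              - ((Vstar νm t - (EP.cfn s νm t : ℝ)/(s:ℝ))
                + ((EP.cfn s νm t : ℝ) - EP.chat s q νm t)/(s:ℝ)) := by
            field_simp
            ring
          rw [e]
          simp only [hAf, hBf, hCf, hDf]
          set a := Vstar νp t - (EP.cfn s νp t : ℝ)/(s:ℝ)
          set b := ((EP.cfn s νp t : ℝ) - EP.chat s q νp t)/(s:ℝ)
          set c := Vstar νm t - (EP.cfn s νm t : ℝ)/(s:ℝ)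
          set d := ((EP.cfn s νm t : ℝ) - EP.chat s q νm t)/(s:ℝ)
          nlinarith [sq_nonneg (a - b), sq_nonneg (c - d), sq_nonneg (a + b - c - d),
            sq_nonneg (a + b + c + d)]
        calc wgt 2 t * (Vstar μ t -
              ((EP.chat s q νp t : ℝ) - (EP.chat s q νm t : ℝ)) / (s:ℝ)) ^ 2
            ≤ wgt 2 t * (4*Af t + 4*Bf t + 4*Cf t + 4*Df t) :=
              mul_le_mul_of_nonneg_left key (hw t)
          _ = 4*(wgt 2 t * Af t) + (4*(wgt 2 t * Bf t)
              + (4*(wgt 2 t * Cf t) + 4*(wgt 2 t * Df t))) := by ring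
      have harith : 4*(2/(s:ℝ)) + (4*(2*(q:ℝ)/(s:ℝ)) + (4*(2/(s:ℝ)) + 4*(2*(q:ℝ)/(s:ℝ))))
          ≤ ε^2 := by
        have h96 : (96:ℝ) ≤ (s:ℝ)*ε^2 := by
          rw [div_le_iff₀ hε2pos] at hsreal
          linarith
        rw [show 4*(2/(s:ℝ)) + (4*(2*(q:ℝ)/(s:ℝ)) + (4*(2/(s:ℝ)) + 4*(2*(q:ℝ)/(s:ℝ))))
            = (16 + 16*(q:ℝ))/(s:ℝ) from by field_simp; ring]
        rw [div_le_iff₀ hsrpos]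
        nlinarith
      calc distSqW 2 (Vstar μ) gfun
          ≤ ∑' t : Node, (ENNReal.ofReal (4*(wgt 2 t * Af t))
            + (ENNReal.ofReal (4*(wgt 2 t * Bf t))
            + (ENNReal.ofReal (4*(wgt 2 t * Cf t)) + ENNReal.ofReal (4*(wgt 2 t * Df t))))) := by
            simp only [distSqW, hg]
            exact Summable.tsum_le_tsum hpt ENNReal.summable ENNReal.summable
        _ = (∑' t : Node, ENNReal.ofReal (4*(wgt 2 t * Af t)))
            + ((∑' t : Node, ENNReal.ofReal (4*(wgt 2 t * Bf t)))
            + ((∑' t : Node, ENNReal.ofReal (4*(wgt 2 t * Cf t)))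
            + (∑' t : Node, ENNReal.ofReal (4*(wgt 2 t * Df t))))) := by
            rw [ENNReal.tsum_add, ENNReal.tsum_add, ENNReal.tsum_add]
        _ = ENNReal.ofReal 4 * (∑' t : Node, ENNReal.ofReal (wgt 2 t * Af t))
            + (ENNReal.ofReal 4 * (∑' t : Node, ENNReal.ofReal (wgt 2 t * Bf t))
            + (ENNReal.ofReal 4 * (∑' t : Node, ENNReal.ofReal (wgt 2 t * Cf t))
            + ENNReal.ofReal 4 * (∑' t : Node, ENNReal.ofReal (wgt 2 t * Df t)))) := by
            rw [EP.tsum_ofReal_four_mul s, EP.tsum_ofReal_four_mul s,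
              EP.tsum_ofReal_four_mul s, EP.tsum_ofReal_four_mul s]
        _ ≤ ENNReal.ofReal 4 * ENNReal.ofReal (2/(s:ℝ))
            + (ENNReal.ofReal 4 * ENNReal.ofReal (2*(q:ℝ)/(s:ℝ))
            + (ENNReal.ofReal 4 * ENNReal.ofReal (2/(s:ℝ))
            + ENNReal.ofReal 4 * ENNReal.ofReal (2*(q:ℝ)/(s:ℝ)))) := by
            exact add_le_add (mul_le_mul_right hT1p _)
              (add_le_add (mul_le_mul_right hT2p _)
                (add_le_add (mul_le_mul_right hT1m _) (mul_le_mul_right hT2m _)))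
        _ = ENNReal.ofReal (4*(2/(s:ℝ)) + (4*(2*(q:ℝ)/(s:ℝ))
            + (4*(2/(s:ℝ)) + 4*(2*(q:ℝ)/(s:ℝ))))) := by
            rw [← ENNReal.ofReal_mul (by norm_num : (0:ℝ) ≤ 4),
              ← ENNReal.ofReal_mul (by norm_num : (0:ℝ) ≤ 4)]
            rw [← ENNReal.ofReal_add (by positivity) (by positivity),
              ← ENNReal.ofReal_add (by positivity) (by positivity),
              ← ENNReal.ofReal_add (by positivity) (by positivity)]
        _ ≤ ENNReal.ofReal (ε ^ 2) := ENNReal.ofReal_le_ofReal harith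
end
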